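/- arXiv:1909.03505 — 5 statements merged into one kernel-verified Lean document; each statement's English description precedes it below -/
import Mathlib

section
/- Suppose F = σ((B_j)_{j∈ℕ}) is generated by a sequence of sets B_j ∈ F, and for each n let π_n be the finite partition of Ω whose elements are the nonempty sets of the form ∩_{j=0}^n C_j with C_j ∈ {B_j, Ω \ B_j} (so that σ(π_n) = σ(B_0, …, B_n)). Then f_{π_n}(μ) := Σ_{A ∈ π_n, μ(A) > 0} 1_A · ν(A)/μ(A) converges μ-a.e. to dν^a/dμ as n → ∞. -/
open MeasureTheory Filter Set
open scoped ENNReal Topology Classical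

/-- The element of the partition `π_n` (generated by `B_0, …, B_n`) containing the point `x`:
the intersection `⋂_{j=0}^n C_j` where `C_j = B_j` if `x ∈ B_j` and `C_j = Ω \ B_j`
otherwise. -/
def cell {Ω : Type*} (B : ℕ → Set Ω) (n : ℕ) (x : Ω) : Set Ω :=
  ⋂ j ∈ Finset.range (n + 1), if x ∈ B j then B j else (B j)ᶜ

/-- The value at `x` of `f_{π_n}(μ) = Σ_{A ∈ π_n, μ(A) > 0} 1_A ⬝ ν(A)/μ(A)`, where `π_n` is the
partition of `Ω` into the nonempty sets of the form `⋂_{j=0}^n C_j`, `C_j ∈ {B_j, Ω \ B_j}`: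
this is `ν(A_x)/μ(A_x)` for `A_x` the cell of `π_n` containing `x`, if `μ(A_x) > 0`,
and `0` otherwise. -/
noncomputable def fPart {Ω : Type*} [MeasurableSpace Ω] (μ ν : Measure Ω) (B : ℕ → Set Ω)
    (n : ℕ) (x : Ω) : ℝ :=
  if μ (cell B n x) ≠ 0 then (ν (cell B n x)).toReal / (μ (cell B n x)).toReal else 0

section Aux

open ProbabilityTheory MeasurableSpace

variable {Ω : Type*}

lemma cell_eq_memPartitionSet (B : ℕ → Set Ω) (n : ℕ) (x : Ω) :
    cell B n x = memPartitionSet B (n + 1) x := by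
  induction n with
  | zero =>
    rw [memPartitionSet_succ]
    by_cases h : x ∈ B 0 <;> simp [cell, h, Set.diff_eq]
  | succ n ih =>
    have hcell : cell B (n + 1) x
        = cell B n x ∩ (if x ∈ B (n + 1) then B (n + 1) else (B (n + 1))ᶜ) := by
      rw [cell, cell, Finset.range_add_one, Finset.set_biInter_insert, Set.inter_comm]
    rw [hcell, ih]
    conv_rhs => rw [memPartitionSet_succ]
    by_cases h : x ∈ B (n + 1) <;> simp [h, Set.diff_eq]

variable {m : MeasurableSpace Ω}

lemma stronglyMeasurable_partition (ρ ξ : Measure Ω) {B : ℕ → Set Ω}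
    (hmB : ∀ n, MeasurableSet (B n)) (n : ℕ) :
    StronglyMeasurable[partitionFiltration hmB n]
      (fun x => (ξ (memPartitionSet B n x)).toReal / (ρ (memPartitionSet B n x)).toReal) := by
  have h : @Measurable Ω (memPartition B n) (partitionFiltration hmB n) ⊤
      (fun x => (⟨memPartitionSet B n x, memPartitionSet_mem B n x⟩ : memPartition B n)) :=
    measurable_memPartitionSet_subtype hmB n ⊤
  exact ((measurable_from_top
      (f := fun u : memPartition B n => (ξ (u : Set Ω)).toReal / (ρ (u : Set Ω)).toReal)).comp
    h).stronglyMeasurable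

lemma condexp_partition (ρ ξ : Measure Ω) [IsFiniteMeasure ρ] [IsFiniteMeasure ξ]
    (hle : ξ ≤ ρ) {B : ℕ → Set Ω} (hmB : ∀ n, MeasurableSet (B n)) (n : ℕ) :
    (fun x => (ξ (memPartitionSet B n x)).toReal / (ρ (memPartitionSet B n x)).toReal)
      =ᵐ[ρ] ρ[fun x => (ξ.rnDeriv ρ x).toReal | partitionFiltration hmB n] := by
  have hm : partitionFiltration hmB n ≤ m := (partitionFiltration hmB).le n
  set g := fun x => (ξ (memPartitionSet B n x)).toReal / (ρ (memPartitionSet B n x)).toReal with hg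
  have hsm : StronglyMeasurable[partitionFiltration hmB n] g :=
    stronglyMeasurable_partition ρ ξ hmB n
  have hg_int : Integrable g ρ := by
    refine Integrable.mono' (integrable_const (1 : ℝ))
      ((hsm.mono hm).aestronglyMeasurable) (ae_of_all _ fun x => ?_)
    rw [Real.norm_eq_abs, abs_of_nonneg (by positivity)]
    refine div_le_one_of_le₀ ?_ ENNReal.toReal_nonneg
    exact ENNReal.toReal_mono (measure_ne_top _ _) (hle _)
  refine ae_eq_condExp_of_forall_setIntegral_eq hm Measure.integrable_toReal_rnDeriv
    (fun s _ _ => hg_int.integrableOn) (fun s hs _ => ?_) hsm.aestronglyMeasurable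
  rw [Measure.setIntegral_toReal_rnDeriv (Measure.absolutelyContinuous_of_le hle) s]
  obtain ⟨S, hS_subset, rfl⟩ := (measurableSet_generateFrom_memPartition_iff B n s).mp hs
  have hSmeas : ∀ u ∈ S, MeasurableSet u :=
    fun u hu => measurableSet_memPartition hmB n (hS_subset hu)
  have hdisj : (S : Set (Set Ω)).Pairwise (Function.onFun Disjoint id) :=
    fun u hu v hv huv => disjoint_memPartition B n (hS_subset hu) (hS_subset hv) huv
  have hsU : ⋃₀ (S : Set (Set Ω)) = ⋃ u ∈ S, (u : Set Ω) := by ext y; simp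
  rw [hsU, integral_biUnion_finset S hSmeas hdisj (fun u _ => hg_int.integrableOn),
    measureReal_def, measure_biUnion_finset (f := fun u : Set Ω => u) hdisj hSmeas,
    ENNReal.toReal_sum (fun u _ => measure_ne_top _ _)]
  refine Finset.sum_congr rfl fun u hu => ?_
  have hcongr : ∀ x ∈ u, g x = (ξ u).toReal / (ρ u).toReal := fun x hx => by
    rw [hg]; simp only; rw [memPartitionSet_of_mem (hS_subset hu) hx]
  rw [setIntegral_congr_fun (hSmeas u hu) hcongr, setIntegral_const, smul_eq_mul]
  by_cases h0 : ρ u = 0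
  · have hξ0 : ξ u = 0 := le_antisymm ((hle u).trans h0.le) (zero_le)
    simp [h0, hξ0]
  · rw [measureReal_def, mul_div_cancel₀]
    exact ENNReal.toReal_ne_zero.mpr ⟨h0, measure_ne_top _ _⟩

end Aux

/-- **Differentiation of measures on a separable measurable space.** If the σ-algebra of `Ω`
is generated by a sequence of sets `(B_j)_{j ∈ ℕ}` and `π_n` is the finite partition of `Ω`
generated by `B_0, …, B_n`, then for finite measures `μ, ν`, the functions
`f_{π_n}(μ) = Σ_{A ∈ π_n, μ(A) > 0} 1_A ⬝ ν(A)/μ(A)` converge `μ`-a.e. to the Radon–Nikodym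
derivative `dν^a/dμ` of the absolutely continuous part of `ν` with respect to `μ`. -/
theorem stmt2 {Ω : Type*} {m : MeasurableSpace Ω} (μ ν : Measure Ω)
    [IsFiniteMeasure μ] [IsFiniteMeasure ν] (B : ℕ → Set Ω)
    (hB : m = MeasurableSpace.generateFrom (Set.range B)) :
    ∀ᵐ x ∂μ, Tendsto (fun n => fPart μ ν B n x) atTop (𝓝 ((ν.rnDeriv μ x).toReal)) := by
  open ProbabilityTheory MeasurableSpace in
  have hmB : ∀ n, MeasurableSet (B n) := fun n => hB ▸ measurableSet_generateFrom ⟨n, rfl⟩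
  set ρ : Measure Ω := μ + ν with hρ
  have hμρ : μ ≤ ρ := Measure.le_add_right le_rfl
  have hνρ : ν ≤ ρ := Measure.le_add_left le_rfl
  have hμρac : μ ≪ ρ := Measure.absolutelyContinuous_of_le hμρ
  have key : ∀ (ξ : Measure Ω), IsFiniteMeasure ξ → ξ ≤ ρ → ∀ᵐ x ∂ρ,
      Tendsto (fun n => (ξ (memPartitionSet B n x)).toReal / (ρ (memPartitionSet B n x)).toReal)
        atTop (𝓝 ((ξ.rnDeriv ρ x).toReal)) := by
    intro ξ _ hle
    have h1 : Integrable (fun x => (ξ.rnDeriv ρ x).toReal) ρ := Measure.integrable_toReal_rnDeriv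
    have h2 : StronglyMeasurable[⨆ n, ProbabilityTheory.partitionFiltration hmB n]
        fun x => (ξ.rnDeriv ρ x).toReal := by
      rw [ProbabilityTheory.iSup_partitionFiltration hmB hB.symm]
      exact (Measure.measurable_rnDeriv _ _).ennreal_toReal.stronglyMeasurable
    have h3 := h1.tendsto_ae_condExp h2
    filter_upwards [h3, ae_all_iff.2 fun n => condexp_partition ρ ξ hle hmB n] with x hx hx2
    exact hx.congr fun n => (hx2 n).symm
  have hμkey := key μ inferInstance hμρ
  have hνkey := key ν inferInstance hνρ
  have hnull : ∀ᵐ x ∂μ, ∀ n, μ (memPartitionSet B n x) ≠ 0 := by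
    rw [ae_all_iff]
    intro n
    have h0 : μ (⋃₀ {A ∈ memPartition B n | μ A = 0}) = 0 := by
      rw [measure_sUnion_null_iff (((finite_memPartition B n).subset
        (Set.sep_subset _ _)).countable)]
      exact fun s hs => hs.2
    rw [ae_iff]
    refine measure_mono_null (fun x hx => ?_) h0
    simp only [not_not, Set.mem_setOf_eq] at hx
    exact ⟨memPartitionSet B n x, ⟨memPartitionSet_mem B n x, hx⟩, mem_memPartitionSet B n x⟩
  have hpos : ∀ᵐ x ∂μ, 0 < μ.rnDeriv ρ x := Measure.rnDeriv_pos hμρac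
  have hfin : ∀ᵐ x ∂μ, μ.rnDeriv ρ x < ∞ := hμρac.ae_le (Measure.rnDeriv_lt_top μ ρ)
  have hchain : ν.rnDeriv μ * μ.rnDeriv ρ =ᵐ[μ] ν.rnDeriv ρ := Measure.rnDeriv_mul_rnDeriv' hμρac
  have hνfin : ∀ᵐ x ∂μ, ν.rnDeriv μ x < ∞ := Measure.rnDeriv_lt_top ν μ
  filter_upwards [hμρac.ae_le hμkey, hμρac.ae_le hνkey, hnull, hpos, hfin, hchain, hνfin]
    with x hμx hνx hx0 hxpos hxfin hxchain hxνfin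
  have hb : 0 < (μ.rnDeriv ρ x).toReal := ENNReal.toReal_pos hxpos.ne' hxfin.ne
  have htarget : (ν.rnDeriv μ x).toReal = (ν.rnDeriv ρ x).toReal / (μ.rnDeriv ρ x).toReal := by
    rw [← hxchain, Pi.mul_apply, ENNReal.toReal_mul, mul_div_cancel_right₀ _ hb.ne']
  rw [htarget]
  have hconv := Tendsto.div (hνx.comp (tendsto_add_atTop_nat 1))
    (hμx.comp (tendsto_add_atTop_nat 1)) hb.ne'
  refine hconv.congr fun n => ?_
  have hA0 : μ (memPartitionSet B (n + 1) x) ≠ 0 := hx0 (n + 1)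
  have hρA0 : (ρ (memPartitionSet B (n + 1) x)).toReal ≠ 0 :=
    ENNReal.toReal_ne_zero.mpr ⟨fun h => hA0 (le_antisymm ((hμρ _).trans h.le) (zero_le)),
      measure_ne_top _ _⟩
  have hμA0 : (μ (memPartitionSet B (n + 1) x)).toReal ≠ 0 :=
    ENNReal.toReal_ne_zero.mpr ⟨hA0, measure_ne_top _ _⟩
  have hcell : cell B n x = memPartitionSet B (n + 1) x := cell_eq_memPartitionSet B n x
  rw [fPart, hcell, if_pos hA0]
  show (ν (memPartitionSet B (n + 1) x)).toReal / (ρ (memPartitionSet B (n + 1) x)).toReal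
      / ((μ (memPartitionSet B (n + 1) x)).toReal / (ρ (memPartitionSet B (n + 1) x)).toReal)
      = (ν (memPartitionSet B (n + 1) x)).toReal / (μ (memPartitionSet B (n + 1) x)).toReal
  field_simp
end

section
/- Let γ := μ + ν, and let (π_n)_{n∈ℕ} be an increasing sequence of finite measurable partitions of Ω (i.e. π_{n+1} refines π_n for all n) chosen so that sup_n ∫_Ω e^{−f_{π_n}(γ)} dγ = sup_π ∫_Ω e^{−f_π(γ)} dγ, where the supremum on the right is over all finite measurable partitions π of Ω and f_π(γ) := Σ_{A ∈ π, γ(A) > 0} 1_A · ν(A)/γ(A). Then f_{π_n}(μ) := Σ_{A ∈ π_n, μ(A) > 0} 1_A · ν(A)/μ(A) converges μ-a.e. to dν^a/dμ as n → ∞. -/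
open MeasureTheory Filter Set
open scoped ENNReal Topology Classical

/-- A finite measurable partition of `Ω`: a finite collection of pairwise disjoint measurable
sets whose union is `Ω`. -/
def IsFinitePartition {Ω : Type*} [MeasurableSpace Ω] (π : Finset (Set Ω)) : Prop :=
  (∀ A ∈ π, MeasurableSet A) ∧
    (π : Set (Set Ω)).PairwiseDisjoint id ∧
    ⋃₀ (π : Set (Set Ω)) = Set.univ

/-- `π'` refines `π` if every element of `π` is a union of elements of `π'`. -/
def Refines {Ω : Type*} (π' π : Finset (Set Ω)) : Prop :=
  ∀ A ∈ π, ∃ S ⊆ π', A = ⋃₀ (S : Set (Set Ω))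

/-- `f_π(λ) := Σ_{A ∈ π, λ(A) > 0} 1_A ⬝ ν(A)/λ(A)`. -/
noncomputable def partFn {Ω : Type*} [MeasurableSpace Ω] (ν lam : Measure Ω)
    (π : Finset (Set Ω)) (x : Ω) : ℝ :=
  ∑ A ∈ π, if lam A ≠ 0 ∧ x ∈ A then (ν A).toReal / (lam A).toReal else 0

namespace PartProof

variable {Ω : Type*} [MeasurableSpace Ω]

/-- the unique cell containing a point -/
lemma exists_mem_cell {p : Finset (Set Ω)} (hp : IsFinitePartition p) (x : Ω) :
    ∃ A ∈ p, x ∈ A := by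
  have hx : x ∈ ⋃₀ (p : Set (Set Ω)) := hp.2.2.symm ▸ Set.mem_univ x
  obtain ⟨A, hA, hxA⟩ := hx
  exact ⟨A, hA, hxA⟩

lemma cell_eq {p : Finset (Set Ω)} (hp : IsFinitePartition p) {A B : Set Ω}
    (hA : A ∈ p) (hB : B ∈ p) {x : Ω} (hxA : x ∈ A) (hxB : x ∈ B) : A = B := by
  by_contra hne
  exact (hp.2.1 hA hB hne).ne_of_mem hxA hxB rfl

lemma partFn_eq {ν lam : Measure Ω} {p : Finset (Set Ω)} (hp : IsFinitePartition p)
    {A : Set Ω} (hA : A ∈ p) {x : Ω} (hx : x ∈ A) :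
    partFn ν lam p x = if lam A ≠ 0 then (ν A).toReal / (lam A).toReal else 0 := by
  rw [partFn, Finset.sum_eq_single_of_mem A hA]
  · simp [hx]
  · intro B hB hBA
    have : x ∉ B := fun hxB => hBA (cell_eq hp hB hA hxB hx)
    simp [this]

lemma partFn_nonneg (ν lam : Measure Ω) (p : Finset (Set Ω)) (x : Ω) :
    0 ≤ partFn ν lam p x := by
  refine Finset.sum_nonneg fun A _ => ?_
  split
  · positivity
  · exact le_refl 0

lemma partFn_le_one {ν lam : Measure Ω} [IsFiniteMeasure lam] {p : Finset (Set Ω)}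
    (hp : IsFinitePartition p) (hle : ν ≤ lam) (x : Ω) : partFn ν lam p x ≤ 1 := by
  obtain ⟨A, hA, hxA⟩ := exists_mem_cell hp x
  rw [partFn_eq hp hA hxA]
  split
  · rename_i h
    refine div_le_one_of_le₀ ?_ ENNReal.toReal_nonneg
    exact ENNReal.toReal_mono (measure_ne_top lam A) (hle A)
  · exact zero_le_one


lemma partFn_measurable_generateFrom (ν lam : Measure Ω) (p : Finset (Set Ω)) :
    Measurable[MeasurableSpace.generateFrom (p : Set (Set Ω))] (partFn ν lam p) := by
  refine Finset.measurable_sum _ fun A hA => ?_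
  have hAm : MeasurableSet[MeasurableSpace.generateFrom (p : Set (Set Ω))] A :=
    MeasurableSpace.measurableSet_generateFrom hA
  by_cases h : lam A = 0
  · simp only [h, ne_eq, not_true_eq_false, false_and, if_false]
    exact measurable_const
  · have : (fun x => if lam A ≠ 0 ∧ x ∈ A then (ν A).toReal / (lam A).toReal else 0)
        = A.indicator (fun _ => (ν A).toReal / (lam A).toReal) := by
      ext x
      by_cases hx : x ∈ A <;> simp [Set.indicator, hx, h]
    rw [this]
    exact measurable_const.indicator hAm

lemma partFn_measurable {ν lam : Measure Ω} {p : Finset (Set Ω)} (hp : IsFinitePartition p) :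
    Measurable (partFn ν lam p) :=
  (partFn_measurable_generateFrom ν lam p).mono
    (MeasurableSpace.generateFrom_le hp.1) le_rfl

lemma integrable_of_bound {lam : Measure Ω} [IsFiniteMeasure lam] {f : Ω → ℝ} (C : ℝ)
    (hf : Measurable f) (h : ∀ x, |f x| ≤ C) : Integrable f lam := by
  refine ⟨hf.aestronglyMeasurable, ?_⟩
  exact HasFiniteIntegral.of_bounded (C := C) (ae_of_all _ h)

lemma integrable_partFn {ν lam lam' : Measure Ω} [IsFiniteMeasure lam] [IsFiniteMeasure lam']
    (hp : IsFinitePartition p) (hle : ν ≤ lam) : Integrable (partFn ν lam p) lam' := by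
  refine integrable_of_bound 1 (partFn_measurable hp) fun x => ?_
  rw [abs_of_nonneg (partFn_nonneg ν lam p x)]
  exact partFn_le_one hp hle x

/-- On a cell, `partFn` is constant. -/
lemma partFn_const_on {ν lam : Measure Ω} {p : Finset (Set Ω)} (hp : IsFinitePartition p)
    {A : Set Ω} (hA : A ∈ p) :
    Set.EqOn (partFn ν lam p)
      (fun _ => if lam A ≠ 0 then (ν A).toReal / (lam A).toReal else 0) A :=
  fun _ hx => partFn_eq hp hA hx

lemma setIntegral_partFn_self {ν lam : Measure Ω} [IsFiniteMeasure lam]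
    (hν : ν ≤ lam) {p : Finset (Set Ω)} (hp : IsFinitePartition p)
    {A : Set Ω} (hA : A ∈ p) :
    ∫ x in A, partFn ν lam p x ∂lam = (ν A).toReal := by
  rw [setIntegral_congr_fun (hp.1 A hA) (partFn_const_on hp hA), setIntegral_const]
  by_cases h : lam A = 0
  · have hν0 : ν A = 0 := le_antisymm (h ▸ hν A) zero_le
    simp [h, hν0]
  · rw [if_pos h, smul_eq_mul, measureReal_def, mul_div_assoc', mul_comm, mul_div_assoc,
      div_self (ENNReal.toReal_ne_zero.2 ⟨h, measure_ne_top lam A⟩), mul_one]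

lemma refines_filter {p q : Finset (Set Ω)} (h : Refines q p) {A : Set Ω} (hA : A ∈ p) :
    A = ⋃₀ ((q.filter (fun B => B ⊆ A) : Finset (Set Ω)) : Set (Set Ω)) := by
  obtain ⟨S, hS, hAS⟩ := h A hA
  apply Set.Subset.antisymm
  · intro x hx
    rw [hAS] at hx
    obtain ⟨B, hB, hxB⟩ := hx
    refine ⟨B, ?_, hxB⟩
    simp only [Finset.coe_filter, Set.mem_setOf_eq]
    exact ⟨hS hB, hAS ▸ Set.subset_sUnion_of_mem hB⟩
  · intro x hx
    obtain ⟨B, hB, hxB⟩ := hx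
    simp only [Finset.coe_filter, Set.mem_setOf_eq] at hB
    exact hB.2 hxB

lemma refines_refl (p : Finset (Set Ω)) : Refines p p :=
  fun A hA => ⟨{A}, Finset.singleton_subset_iff.2 hA, by simp⟩

lemma refines_trans {p q r : Finset (Set Ω)} (hqp : Refines q p) (hrq : Refines r q) :
    Refines r p := by
  intro A hA
  refine ⟨r.filter (fun C => C ⊆ A), Finset.filter_subset _ _, ?_⟩
  apply Set.Subset.antisymm
  · intro x hx
    have hx' := (refines_filter hqp hA) ▸ hx
    obtain ⟨B, hB, hxB⟩ := hx'
    simp only [Finset.coe_filter, Set.mem_setOf_eq] at hB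
    have hx'' := (refines_filter hrq hB.1) ▸ hxB
    obtain ⟨C, hC, hxC⟩ := hx''
    simp only [Finset.coe_filter, Set.mem_setOf_eq] at hC
    refine ⟨C, ?_, hxC⟩
    simp only [Finset.coe_filter, Set.mem_setOf_eq]
    exact ⟨hC.1, hC.2.trans hB.2⟩
  · intro x hx
    obtain ⟨C, hC, hxC⟩ := hx
    simp only [Finset.coe_filter, Set.mem_setOf_eq] at hC
    exact hC.2 hxC

/-- integral of `partFn ν lam q` over a cell of a coarser partition. -/
lemma setIntegral_partFn_refines {ν lam : Measure Ω} [IsFiniteMeasure lam] [IsFiniteMeasure ν]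
    (hν : ν ≤ lam) {p q : Finset (Set Ω)} (hp : IsFinitePartition p)
    (hq : IsFinitePartition q) (hqp : Refines q p) {A : Set Ω} (hA : A ∈ p) :
    ∫ x in A, partFn ν lam q x ∂lam = (ν A).toReal := by
  obtain ⟨S, hSq, hAS⟩ := hqp A hA
  have hSmeas : ∀ B ∈ S, MeasurableSet B := fun B hB => hq.1 B (hSq hB)
  have hSdisj : Set.Pairwise (S : Set (Set Ω)) (Function.onFun Disjoint fun B : Set Ω => B) :=
    fun B hB C hC hBC => hq.2.1 (hSq hB) (hSq hC) hBC
  have hbi : A = ⋃ B ∈ S, B := by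
    rw [hAS, Set.sUnion_eq_biUnion]; simp
  rw [hbi, integral_biUnion_finset (μ := lam) (f := partFn ν lam q) S hSmeas hSdisj
    (fun B hB => (integrable_partFn hq hν).integrableOn)]
  have h1 : ∀ B ∈ S, ∫ x in B, partFn ν lam q x ∂lam = (ν B).toReal :=
    fun B hB => setIntegral_partFn_self hν hq (hSq hB)
  rw [Finset.sum_congr rfl h1]
  rw [← ENNReal.toReal_sum (fun B _ => measure_ne_top ν B)]
  congr 1
  exact (measure_biUnion_finset hSdisj hSmeas).symm

lemma integral_partFn {ν lam : Measure Ω} [IsFiniteMeasure lam] [IsFiniteMeasure ν]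
    (hν : ν ≤ lam) {p : Finset (Set Ω)} (hp : IsFinitePartition p) :
    ∫ x, partFn ν lam p x ∂lam = (ν Set.univ).toReal := by
  rw [← setIntegral_univ]
  exact setIntegral_partFn_refines hν
    (⟨fun A hA => by simpa using (Finset.mem_singleton.1 hA) ▸ MeasurableSet.univ,
      by simp [Set.PairwiseDisjoint, Set.Pairwise],
      by simp⟩ : IsFinitePartition {Set.univ})
    hp (fun A hA => by
      refine ⟨p, le_rfl, ?_⟩
      rw [Finset.mem_singleton.1 hA, hp.2.2]) (Finset.mem_singleton_self _)


noncomputable def commonRef (p q : Finset (Set Ω)) : Finset (Set Ω) :=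
  (p ×ˢ q).image fun z => z.1 ∩ z.2

lemma commonRef_isPartition {p q : Finset (Set Ω)} (hp : IsFinitePartition p)
    (hq : IsFinitePartition q) : IsFinitePartition (commonRef p q) := by
  refine ⟨?_, ?_, ?_⟩
  · intro C hC
    obtain ⟨⟨A, B⟩, hz, rfl⟩ := Finset.mem_image.1 hC
    rw [Finset.mem_product] at hz
    exact (hp.1 A hz.1).inter (hq.1 B hz.2)
  · intro C hC C' hC' hne
    rw [Finset.mem_coe] at hC hC'
    obtain ⟨⟨A, B⟩, hz, rfl⟩ := Finset.mem_image.1 hC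
    obtain ⟨⟨A', B'⟩, hz', rfl⟩ := Finset.mem_image.1 hC'
    rw [Finset.mem_product] at hz hz'
    by_cases hAA : A = A'
    · subst hAA
      have hBB : B ≠ B' := fun h => hne (by rw [h])
      exact Set.disjoint_left.2 fun x hx hx' =>
        Set.disjoint_left.1 (hq.2.1 hz.2 hz'.2 hBB) hx.2 hx'.2
    · exact Set.disjoint_left.2 fun x hx hx' =>
        Set.disjoint_left.1 (hp.2.1 hz.1 hz'.1 hAA) hx.1 hx'.1
  · apply Set.eq_univ_of_forall
    intro x
    obtain ⟨A, hA, hxA⟩ := exists_mem_cell hp x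
    obtain ⟨B, hB, hxB⟩ := exists_mem_cell hq x
    exact ⟨A ∩ B, Finset.mem_coe.2 (Finset.mem_image.2
      ⟨(A, B), Finset.mem_product.2 ⟨hA, hB⟩, rfl⟩), hxA, hxB⟩

lemma commonRef_refines_left {p q : Finset (Set Ω)} (hq : IsFinitePartition q) :
    Refines (commonRef p q) p := by
  intro A hA
  refine ⟨q.image (fun B => A ∩ B), ?_, ?_⟩
  · intro C hC
    obtain ⟨B, hB, rfl⟩ := Finset.mem_image.1 hC
    exact Finset.mem_image.2 ⟨(A, B), Finset.mem_product.2 ⟨hA, hB⟩, rfl⟩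
  · apply Set.Subset.antisymm
    · intro x hx
      obtain ⟨B, hB, hxB⟩ := exists_mem_cell hq x
      exact ⟨A ∩ B, Finset.mem_coe.2 (Finset.mem_image.2 ⟨B, hB, rfl⟩), hx, hxB⟩
    · intro x hx
      obtain ⟨C, hC, hxC⟩ := hx
      rw [Finset.mem_coe] at hC
      obtain ⟨B, _, rfl⟩ := Finset.mem_image.1 hC
      exact hxC.1

lemma commonRef_refines_right {p q : Finset (Set Ω)} (hp : IsFinitePartition p) :
    Refines (commonRef p q) q := by
  intro B hB
  refine ⟨p.image (fun A => A ∩ B), ?_, ?_⟩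
  · intro C hC
    obtain ⟨A, hA, rfl⟩ := Finset.mem_image.1 hC
    exact Finset.mem_image.2 ⟨(A, B), Finset.mem_product.2 ⟨hA, hB⟩, rfl⟩
  · apply Set.Subset.antisymm
    · intro x hx
      obtain ⟨A, hA, hxA⟩ := exists_mem_cell hp x
      exact ⟨A ∩ B, Finset.mem_coe.2 (Finset.mem_image.2 ⟨A, hA, rfl⟩), hxA, hx⟩
    · intro x hx
      obtain ⟨C, hC, hxC⟩ := hx
      rw [Finset.mem_coe] at hC
      obtain ⟨A, _, rfl⟩ := Finset.mem_image.1 hC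
      exact hxC.2

/-- decomposition of an integral over the cells of a partition -/
lemma integral_eq_sum_cells {lam : Measure Ω} [IsFiniteMeasure lam] {p : Finset (Set Ω)}
    (hp : IsFinitePartition p) {f : Ω → ℝ} (hf : Integrable f lam) :
    ∫ x, f x ∂lam = ∑ A ∈ p, ∫ x in A, f x ∂lam := by
  have hbi : (Set.univ : Set Ω) = ⋃ A ∈ p, A := by
    rw [← hp.2.2, Set.sUnion_eq_biUnion]; simp
  have hdisj : Set.Pairwise (p : Set (Set Ω)) (Function.onFun Disjoint fun B : Set Ω => B) :=
    fun B hB C hC hBC => hp.2.1 hB hC hBC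
  rw [← setIntegral_univ, hbi,
    integral_biUnion_finset (μ := lam) (f := f) p (fun A hA => hp.1 A hA) hdisj
      (fun A _ => hf.integrableOn)]

/-- the quadratic lower bound for the exponential -/
lemma exp_quadratic_bound {a t : ℝ} (ha0 : 0 ≤ a) (ha1 : a ≤ 1) (ht : t ≤ 2) :
    Real.exp (-a) - Real.exp (-a) * (t - a) + Real.exp (-1) / 4 * (t - a) ^ 2
      ≤ Real.exp (-t) := by
  have h1 : 1 + (a - t) / 2 ≤ Real.exp ((a - t) / 2) := by
    have := Real.add_one_le_exp ((a - t) / 2); linarith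
  have h2 : Real.exp (-1) ≤ Real.exp (-a) := Real.exp_le_exp.2 (by linarith)
  have h3 : Real.exp (-t) = Real.exp (-a) * (Real.exp ((a - t) / 2)) ^ 2 := by
    rw [← Real.exp_nat_mul, ← Real.exp_add]; ring_nf
  have h4 : (0 : ℝ) ≤ 1 + (a - t) / 2 := by linarith
  have h5 : (1 + (a - t) / 2) ^ 2 ≤ (Real.exp ((a - t) / 2)) ^ 2 := by
    apply pow_le_pow_left₀ h4 h1 2
  have h6 : Real.exp (-a) * (1 + (a - t) / 2) ^ 2 ≤ Real.exp (-t) := by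
    rw [h3]
    exact mul_le_mul_of_nonneg_left h5 (Real.exp_pos _).le
  have h7 : Real.exp (-a) * (1 + (a - t) / 2) ^ 2
      = Real.exp (-a) - Real.exp (-a) * (t - a) + Real.exp (-a) / 4 * (t - a) ^ 2 := by
    ring
  nlinarith [sq_nonneg (t - a), (Real.exp_pos (-a)).le]


lemma integrable_exp_neg_partFn {ν lam : Measure Ω} [IsFiniteMeasure lam]
    {p : Finset (Set Ω)} (hp : IsFinitePartition p) :
    Integrable (fun x => Real.exp (-(partFn ν lam p x))) lam := by
  refine integrable_of_bound 1 (Real.measurable_exp.comp (partFn_measurable hp).neg) fun x => ?_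
  rw [abs_of_nonneg (Real.exp_pos _).le]
  calc Real.exp (-(partFn ν lam p x)) ≤ Real.exp 0 :=
        Real.exp_le_exp.2 (neg_nonpos.2 (partFn_nonneg ν lam p x))
    _ = 1 := Real.exp_zero

lemma integrable_sq_diff {ν lam : Measure Ω} [IsFiniteMeasure lam]
    {p q : Finset (Set Ω)} (hp : IsFinitePartition p) (hq : IsFinitePartition q)
    (hν : ν ≤ lam) :
    Integrable (fun x => (partFn ν lam q x - partFn ν lam p x) ^ 2) lam := by
  refine integrable_of_bound 1
    (((partFn_measurable hq).sub (partFn_measurable hp)).pow_const 2) fun x => ?_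
  rw [abs_of_nonneg (sq_nonneg _)]
  have h1 := partFn_nonneg ν lam q x
  have h2 := partFn_nonneg ν lam p x
  have h3 := partFn_le_one hq hν x
  have h4 := partFn_le_one hp hν x
  nlinarith

lemma cell_ineq {ν lam : Measure Ω} [IsFiniteMeasure lam] [IsFiniteMeasure ν]
    (hν : ν ≤ lam) {p q : Finset (Set Ω)} (hp : IsFinitePartition p)
    (hq : IsFinitePartition q) (hqp : Refines q p) {A : Set Ω} (hA : A ∈ p) :
    ∫ x in A, Real.exp (-(partFn ν lam p x)) ∂lam
      + Real.exp (-1) / 4 * ∫ x in A, (partFn ν lam q x - partFn ν lam p x) ^ 2 ∂lam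
      ≤ ∫ x in A, Real.exp (-(partFn ν lam q x)) ∂lam := by
  by_cases h0 : lam A = 0
  · rw [Measure.restrict_eq_zero.2 h0]
    simp
  · set a : ℝ := (ν A).toReal / (lam A).toReal with ha_def
    have hlamA_pos : 0 < (lam A).toReal :=
      ENNReal.toReal_pos h0 (measure_ne_top lam A)
    have ha0 : 0 ≤ a := div_nonneg ENNReal.toReal_nonneg ENNReal.toReal_nonneg
    have ha1 : a ≤ 1 := div_le_one_of_le₀
      (ENNReal.toReal_mono (measure_ne_top lam A) (hν A)) ENNReal.toReal_nonneg
    have hAm : MeasurableSet A := hp.1 A hA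
    have hgp : Set.EqOn (partFn ν lam p) (fun _ => a) A := by
      intro x hx
      rw [partFn_eq hp hA hx, if_pos h0]
    -- rewrite integrals involving partFn p on A
    have e1 : ∫ x in A, Real.exp (-(partFn ν lam p x)) ∂lam
        = Real.exp (-a) * (lam A).toReal := by
      rw [setIntegral_congr_fun hAm (fun x hx => by rw [hgp hx]), setIntegral_const,
        smul_eq_mul, mul_comm, measureReal_def]
    have e2 : ∫ x in A, (partFn ν lam q x - partFn ν lam p x) ^ 2 ∂lam
        = ∫ x in A, (partFn ν lam q x - a) ^ 2 ∂lam := by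
      refine setIntegral_congr_fun hAm (fun x hx => by rw [hgp hx])
    have hq_int : Integrable (partFn ν lam q) (lam.restrict A) :=
      (integrable_partFn hq hν).restrict
    have hsq_int : Integrable (fun x => (partFn ν lam q x - a) ^ 2) (lam.restrict A) := by
      refine (integrable_of_bound (lam := lam) ((1 + a) ^ 2)
        (((partFn_measurable hq).sub measurable_const).pow_const 2) fun x => ?_).restrict
      rw [abs_of_nonneg (sq_nonneg _)]
      have h1 := partFn_nonneg ν lam q x
      have h3 := partFn_le_one hq hν x
      change (partFn ν lam q x - a) ^ 2 ≤ (1 + a) ^ 2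
      nlinarith
    have e3 : ∫ x in A, (partFn ν lam q x - a) ∂lam = 0 := by
      rw [integral_sub hq_int (integrable_const a),
        setIntegral_partFn_refines hν hp hq hqp hA, setIntegral_const, measureReal_def, smul_eq_mul,
        ha_def]
      field_simp
      simp
    -- pointwise inequality on A
    have hpt : ∀ x ∈ A,
        Real.exp (-a) - Real.exp (-a) * (partFn ν lam q x - a)
          + Real.exp (-1) / 4 * (partFn ν lam q x - a) ^ 2
        ≤ Real.exp (-(partFn ν lam q x)) := fun x _ =>
      exp_quadratic_bound ha0 ha1 ((partFn_le_one hq hν x).trans one_le_two)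
    have hLHS_int : Integrable (fun x =>
        Real.exp (-a) - Real.exp (-a) * (partFn ν lam q x - a)
          + Real.exp (-1) / 4 * (partFn ν lam q x - a) ^ 2) (lam.restrict A) := by
      refine ((integrable_const _).sub ((hq_int.sub (integrable_const a)).const_mul _)).add
        (hsq_int.const_mul _)
    have hmono := setIntegral_mono_on hLHS_int
      (integrable_exp_neg_partFn (ν := ν) hq).restrict hAm hpt
    have e4 : ∫ x in A, (Real.exp (-a) - Real.exp (-a) * (partFn ν lam q x - a)
          + Real.exp (-1) / 4 * (partFn ν lam q x - a) ^ 2) ∂lam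
        = Real.exp (-a) * (lam A).toReal
          + Real.exp (-1) / 4 * ∫ x in A, (partFn ν lam q x - a) ^ 2 ∂lam := by
      have intm : Integrable (fun x => Real.exp (-a) * (partFn ν lam q x - a))
          (lam.restrict A) := (hq_int.sub (integrable_const a)).const_mul _
      have int1 : Integrable (fun x => Real.exp (-a) - Real.exp (-a) * (partFn ν lam q x - a))
          (lam.restrict A) := (integrable_const _).sub intm
      have int2 : Integrable (fun x => Real.exp (-1) / 4 * (partFn ν lam q x - a) ^ 2)
          (lam.restrict A) := hsq_int.const_mul _
      rw [integral_add int1 int2, integral_sub (integrable_const _) intm,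
        integral_const_mul, e3, integral_const_mul, setIntegral_const, measureReal_def, smul_eq_mul, mul_comm]
      ring
    rw [e4] at hmono
    rw [e1, e2]
    exact hmono

/-- The key inequality: refining a partition increases `∫ e^{-f_π}` by at least a
multiple of the L² distance. -/
lemma key_ineq {ν lam : Measure Ω} [IsFiniteMeasure lam] [IsFiniteMeasure ν]
    (hν : ν ≤ lam) {p q : Finset (Set Ω)} (hp : IsFinitePartition p)
    (hq : IsFinitePartition q) (hqp : Refines q p) :
    ∫ x, Real.exp (-(partFn ν lam p x)) ∂lam
      + Real.exp (-1) / 4 * ∫ x, (partFn ν lam q x - partFn ν lam p x) ^ 2 ∂lam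
      ≤ ∫ x, Real.exp (-(partFn ν lam q x)) ∂lam := by
  rw [integral_eq_sum_cells hp (integrable_exp_neg_partFn hp),
    integral_eq_sum_cells hp (integrable_exp_neg_partFn hq),
    integral_eq_sum_cells hp (integrable_sq_diff hp hq hν), Finset.mul_sum,
    ← Finset.sum_add_distrib]
  exact Finset.sum_le_sum fun A hA => cell_ineq hν hp hq hqp hA


lemma generateFrom_le_ambient {p : Finset (Set Ω)} (hp : IsFinitePartition p) :
    MeasurableSpace.generateFrom (p : Set (Set Ω)) ≤ ‹MeasurableSpace Ω› :=
  MeasurableSpace.generateFrom_le hp.1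

lemma generateFrom_mono_refines {p q : Finset (Set Ω)} (hqp : Refines q p) :
    MeasurableSpace.generateFrom (p : Set (Set Ω))
      ≤ MeasurableSpace.generateFrom (q : Set (Set Ω)) := by
  refine MeasurableSpace.generateFrom_le fun A hA => ?_
  obtain ⟨S, hSq, hAS⟩ := hqp A hA
  rw [hAS]
  exact MeasurableSet.sUnion S.countable_toSet
    fun B hB => MeasurableSpace.measurableSet_generateFrom (hSq hB)

lemma isPiSystem_partition {p : Finset (Set Ω)} (hp : IsFinitePartition p) :
    IsPiSystem (insert ∅ (p : Set (Set Ω))) := by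
  intro A hA B hB hne
  rcases hA with rfl | hA
  · simp at hne
  rcases hB with rfl | hB
  · simp at hne
  by_cases hAB : A = B
  · subst hAB; simpa using Or.inr hA
  · exact absurd (Set.disjoint_iff_inter_eq_empty.1 (hp.2.1 hA hB hAB))
      (Set.nonempty_iff_ne_empty.1 hne)

lemma setIntegral_partFn_eq_on_generated {ν lam : Measure Ω} [IsFiniteMeasure lam]
    [IsFiniteMeasure ν] (hν : ν ≤ lam) {p q : Finset (Set Ω)} (hp : IsFinitePartition p)
    (hq : IsFinitePartition q) (hqp : Refines q p) :
    ∀ s : Set Ω, MeasurableSet[MeasurableSpace.generateFrom (p : Set (Set Ω))] s →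
      ∫ x in s, partFn ν lam q x ∂lam = ∫ x in s, partFn ν lam p x ∂lam := by
  have hle := generateFrom_le_ambient hp
  have h_eq : MeasurableSpace.generateFrom (p : Set (Set Ω))
      = MeasurableSpace.generateFrom (insert ∅ (p : Set (Set Ω))) :=
    (MeasurableSpace.generateFrom_insert_empty _).symm
  intro s hs
  refine MeasurableSpace.induction_on_inter
    (m := MeasurableSpace.generateFrom (p : Set (Set Ω)))
    (C := fun t _ => ∫ x in t, partFn ν lam q x ∂lam = ∫ x in t, partFn ν lam p x ∂lam)
    h_eq (isPiSystem_partition hp) ?_ ?_ ?_ ?_ s hs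
  · simp
  · rintro t ht
    rcases ht with rfl | ht
    · simp
    · rw [setIntegral_partFn_refines hν hp hq hqp ht, setIntegral_partFn_self hν hp ht]
  · intro t ht hteq
    have htm : MeasurableSet t := hle t ht
    rw [setIntegral_compl htm (integrable_partFn hq hν),
      setIntegral_compl htm (integrable_partFn hp hν), hteq,
      integral_partFn hν hq, integral_partFn hν hp]
  · intro f hfd hfm hfeq
    have hfm' : ∀ i, MeasurableSet (f i) := fun i => hle _ (hfm i)
    rw [integral_iUnion hfm' hfd (integrable_partFn hq hν).integrableOn,
      integral_iUnion hfm' hfd (integrable_partFn hp hν).integrableOn]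
    exact tsum_congr hfeq

end PartProof

/-- **Differentiation of measures on an arbitrary measurable space.** Let `μ, ν` be finite
measures on `(Ω, F)` and `γ := μ + ν`. If `(π_n)_n` is an increasing (refining) sequence of
finite measurable partitions of `Ω` that asymptotically maximizes
`π ↦ ∫ e^{-f_π(γ)} dγ` over all finite measurable partitions, then
`f_{π_n}(μ) → dν^a/dμ` `μ`-a.e. -/
theorem stmt4 {Ω : Type*} [MeasurableSpace Ω] (μ ν : Measure Ω)
    [IsFiniteMeasure μ] [IsFiniteMeasure ν]
    (π : ℕ → Finset (Set Ω)) (hπ : ∀ n, IsFinitePartition (π n))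
    (hmono : ∀ n, Refines (π (n + 1)) (π n))
    (hmax : (⨆ n, ∫ x, Real.exp (-(partFn ν (μ + ν) (π n) x)) ∂(μ + ν)) =
      ⨆ p : {p : Finset (Set Ω) // IsFinitePartition p},
        ∫ x, Real.exp (-(partFn ν (μ + ν) p.1 x)) ∂(μ + ν)) :
    ∀ᵐ x ∂μ, Tendsto (fun n => partFn ν μ (π n) x) atTop (𝓝 ((ν.rnDeriv μ x).toReal)) := by
  classical
  open PartProof in
  set γ : Measure Ω := μ + ν with hγ_def
  have hνγ : ν ≤ γ := Measure.le_add_left le_rfl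
  have hμγ : μ ≤ γ := Measure.le_add_right le_rfl
  have hμγac : μ ≪ γ := hμγ.absolutelyContinuous
  have hνγac : ν ≪ γ := hνγ.absolutelyContinuous
  set g : ℕ → Ω → ℝ := fun n => partFn ν γ (π n) with hg_def
  have hchain : ∀ {n m : ℕ}, n ≤ m → Refines (π m) (π n) := by
    intro n m h
    induction m with
    | zero => exact (Nat.le_zero.1 h) ▸ refines_refl _
    | succ k ih =>
      rcases Nat.lt_or_ge n (k + 1) with h' | h'
      · exact refines_trans (ih (Nat.lt_succ_iff.1 h')) (hmono k)
      · exact (le_antisymm h h') ▸ refines_refl _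
  -- the filtration generated by the partitions
  set ℱ : Filtration ℕ ‹MeasurableSpace Ω› :=
    { seq := fun n => MeasurableSpace.generateFrom ((π n : Set (Set Ω)))
      mono' := fun n m h => generateFrom_mono_refines (hchain h)
      le' := fun n => generateFrom_le_ambient (hπ n) } with hℱ_def
  have hint : ∀ n, Integrable (g n) γ := fun n => integrable_partFn (hπ n) hνγ
  have hadapted : StronglyAdapted ℱ g :=
    fun n => (partFn_measurable_generateFrom ν γ (π n)).stronglyMeasurable
  have hmart : Martingale g ℱ γ := by
    refine ⟨hadapted, fun i j hij => ?_⟩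
    haveI : SigmaFinite (γ.trim (ℱ.le i)) := by infer_instance
    refine (ae_eq_condExp_of_forall_setIntegral_eq (ℱ.le i) (hint j)
      (fun s _ _ => (hint i).integrableOn)
      (fun s hs _ =>
        (setIntegral_partFn_eq_on_generated hνγ (hπ i) (hπ j) (hchain hij) s hs).symm)
      ?_).symm
    exact (StronglyMeasurable.aestronglyMeasurable (hadapted i))
  have hbdd : ∀ n, eLpNorm (g n) 1 γ ≤ (γ Set.univ).toNNReal := by
    intro n
    refine (eLpNorm_le_of_ae_bound (C := 1) (ae_of_all _ fun x => ?_)).trans ?_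
    · rw [Real.norm_eq_abs, abs_of_nonneg (partFn_nonneg ν γ (π n) x)]
      exact partFn_le_one (hπ n) hνγ x
    · simp only [ENNReal.ofReal_one, mul_one, ENNReal.toReal_one]
      rw [ENNReal.coe_toNNReal (measure_ne_top γ _)]
      simp
  have hsub := hmart.submartingale
  have hconv := hsub.ae_tendsto_limitProcess hbdd
  set h : Ω → ℝ := ℱ.limitProcess g γ with hh_def
  have hint_h : Integrable h γ := (hsub.memLp_limitProcess hbdd).integrable le_rfl
  -- the analytic part
  set c : ℝ := Real.exp (-1) / 4 with hc_def
  have hc : 0 < c := by positivity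
  set I : ℕ → ℝ := fun n => ∫ x, Real.exp (-(g n x)) ∂γ with hI_def
  set L : ℝ := ⨆ p : {p : Finset (Set Ω) // IsFinitePartition p},
    ∫ x, Real.exp (-(partFn ν γ p.1 x)) ∂γ with hL_def
  have hJ_bound : ∀ p : Finset (Set Ω), IsFinitePartition p →
      ∫ x, Real.exp (-(partFn ν γ p x)) ∂γ ≤ (γ Set.univ).toReal := by
    intro p hp
    calc ∫ x, Real.exp (-(partFn ν γ p x)) ∂γ ≤ ∫ _x, (1 : ℝ) ∂γ := by
          refine integral_mono (integrable_exp_neg_partFn hp) (integrable_const 1) fun x => ?_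
          calc Real.exp (-(partFn ν γ p x)) ≤ Real.exp 0 :=
                Real.exp_le_exp.2 (neg_nonpos.2 (partFn_nonneg ν γ p x))
            _ = 1 := Real.exp_zero
      _ = (γ Set.univ).toReal := by simp [measureReal_def]
  have hbddAbove : BddAbove (Set.range fun p : {p : Finset (Set Ω) // IsFinitePartition p} =>
      ∫ x, Real.exp (-(partFn ν γ p.1 x)) ∂γ) := by
    refine ⟨(γ Set.univ).toReal, ?_⟩
    rintro y ⟨p, rfl⟩
    exact hJ_bound p.1 p.2
  have hJleL : ∀ p : Finset (Set Ω), IsFinitePartition p →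
      ∫ x, Real.exp (-(partFn ν γ p x)) ∂γ ≤ L :=
    fun p hp => le_ciSup hbddAbove (⟨p, hp⟩ : {p : Finset (Set Ω) // IsFinitePartition p})
  have hIleL : ∀ n, I n ≤ L := fun n => hJleL (π n) (hπ n)
  have hkey : ∀ (n : ℕ) (q : Finset (Set Ω)), IsFinitePartition q → Refines q (π n) →
      c * ∫ x, (partFn ν γ q x - g n x) ^ 2 ∂γ ≤ L - I n := by
    intro n q hq href
    have h1 := key_ineq hνγ (hπ n) hq href
    have h2 := hJleL q hq
    simp only [hI_def, hg_def, hc_def]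
    linarith
  have hImono : ∀ {n m : ℕ}, n ≤ m → I n ≤ I m := by
    intro n m hnm
    have h1 := key_ineq hνγ (hπ n) (hπ m) (hchain hnm)
    have h2 : 0 ≤ ∫ x, (partFn ν γ (π m) x - partFn ν γ (π n) x) ^ 2 ∂γ :=
      integral_nonneg fun x => sq_nonneg _
    have h3 : 0 ≤ Real.exp (-1) / 4 * ∫ x, (partFn ν γ (π m) x - partFn ν γ (π n) x) ^ 2 ∂γ :=
      mul_nonneg (by positivity) h2
    simp only [hI_def, hg_def]
    linarith
  have hLsup : (⨆ n, I n) = L := hmax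
  have hItend : ∀ ε : ℝ, 0 < ε → ∃ N, ∀ n, N ≤ n → L - I n < ε := by
    intro ε hε
    have hbddI : BddAbove (Set.range I) := ⟨L, by rintro y ⟨n, rfl⟩; exact hIleL n⟩
    have : L - ε < ⨆ n, I n := by rw [hLsup]; linarith
    obtain ⟨N, hN⟩ := (lt_ciSup_iff hbddI).1 this
    exact ⟨N, fun n hn => by have := hImono hn; linarith⟩
  -- identification of the limit by testing against arbitrary measurable sets
  have hA_lim : ∀ A : Set Ω, MeasurableSet A →
      Tendsto (fun n => ∫ x in A, g n x ∂γ) atTop (𝓝 ((ν A).toReal)) := by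
    intro A hAm
    set pA : Finset (Set Ω) := {A, Aᶜ} with hpA_def
    have hApA : A ∈ pA := Finset.mem_insert_self _ _
    have hpA : IsFinitePartition pA := by
      refine ⟨?_, ?_, ?_⟩
      · intro B hB
        rcases Finset.mem_insert.1 hB with rfl | hB
        · exact hAm
        · rw [Finset.mem_singleton.1 hB]
          exact hAm.compl
      · intro B hB C hC hne
        rw [Finset.coe_insert, Finset.coe_singleton] at hB hC
        rcases hB with rfl | rfl <;> rcases hC with rfl | rfl
        · exact absurd rfl hne
        · exact disjoint_compl_right
        · exact disjoint_compl_left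
        · exact absurd rfl hne
      · rw [Finset.coe_insert, Finset.coe_singleton, Set.sUnion_insert, Set.sUnion_singleton,
          Set.union_compl_self]
    set r : ℕ → Finset (Set Ω) := fun n => commonRef (π n) pA with hr_def
    have hr : ∀ n, IsFinitePartition (r n) := fun n => commonRef_isPartition (hπ n) hpA
    have hrπ : ∀ n, Refines (r n) (π n) := fun n => commonRef_refines_left hpA
    have hrpA : ∀ n, Refines (r n) pA := fun n => commonRef_refines_right (hπ n)
    have h_intA : ∀ n, ∫ x in A, partFn ν γ (r n) x ∂γ = (ν A).toReal :=
      fun n => setIntegral_partFn_refines hνγ hpA (hr n) (hrpA n) hApA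
    rw [Metric.tendsto_atTop]
    intro ε hε
    set δ : ℝ := ε / (2 * ((γ Set.univ).toReal + 1)) with hδ_def
    have hγU : 0 ≤ (γ Set.univ).toReal := ENNReal.toReal_nonneg
    have hδ : 0 < δ := by positivity
    obtain ⟨N, hN⟩ := hItend (c * δ * (ε / 2)) (by positivity)
    refine ⟨N, fun n hn => ?_⟩
    have hsq_le : ∫ x, (partFn ν γ (r n) x - g n x) ^ 2 ∂γ ≤ (L - I n) / c := by
      rw [le_div_iff₀ hc, mul_comm]
      exact hkey n (r n) (hr n) (hrπ n)
    have hdist : dist (∫ x in A, g n x ∂γ) ((ν A).toReal)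
        = |∫ x in A, (g n x - partFn ν γ (r n) x) ∂γ| := by
      rw [Real.dist_eq, ← h_intA n,
        integral_sub (hint n).restrict (integrable_partFn (hr n) hνγ).restrict]
    rw [hdist]
    have habs_int : Integrable (fun x => |g n x - partFn ν γ (r n) x|) γ :=
      ((hint n).sub (integrable_partFn (hr n) hνγ)).abs
    have h1 : |∫ x in A, (g n x - partFn ν γ (r n) x) ∂γ|
        ≤ ∫ x in A, |g n x - partFn ν γ (r n) x| ∂γ := by
      calc |∫ x in A, (g n x - partFn ν γ (r n) x) ∂γ|
          = ‖∫ x in A, (g n x - partFn ν γ (r n) x) ∂γ‖ := (Real.norm_eq_abs _).symm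
        _ ≤ ∫ x in A, ‖g n x - partFn ν γ (r n) x‖ ∂γ := norm_integral_le_integral_norm _
        _ = ∫ x in A, |g n x - partFn ν γ (r n) x| ∂γ := by
            simp [Real.norm_eq_abs]
    have h2 : ∫ x in A, |g n x - partFn ν γ (r n) x| ∂γ
        ≤ ∫ x, |g n x - partFn ν γ (r n) x| ∂γ :=
      setIntegral_le_integral habs_int (ae_of_all _ fun x => abs_nonneg _)
    have h3 : ∫ x, |g n x - partFn ν γ (r n) x| ∂γ
        ≤ δ * (γ Set.univ).toReal + δ⁻¹ * ∫ x, (partFn ν γ (r n) x - g n x) ^ 2 ∂γ := by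
      have hpt : ∀ x, |g n x - partFn ν γ (r n) x|
          ≤ δ + δ⁻¹ * (partFn ν γ (r n) x - g n x) ^ 2 := by
        intro x
        set d : ℝ := partFn ν γ (r n) x - g n x with hd_def
        rw [abs_sub_comm, ← hd_def, ← sq_abs d, ← sub_nonneg]
        have hδ0 : δ ≠ 0 := ne_of_gt hδ
        have hdd : δ * δ⁻¹ = 1 := mul_inv_cancel₀ hδ0
        have h7 : 0 ≤ δ * (δ + δ⁻¹ * |d| ^ 2 - |d|) := by
          have e : δ * (δ + δ⁻¹ * |d| ^ 2 - |d|) = (|d| - δ) ^ 2 + δ * |d| := by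
            linear_combination |d| ^ 2 * hdd
          rw [e]
          positivity
        have e2 : δ + δ⁻¹ * |d| ^ 2 - |d| = δ * (δ + δ⁻¹ * |d| ^ 2 - |d|) / δ :=
          (mul_div_cancel_left₀ _ hδ0).symm
        rw [e2]
        exact div_nonneg h7 hδ.le
      calc ∫ x, |g n x - partFn ν γ (r n) x| ∂γ
          ≤ ∫ x, (δ + δ⁻¹ * (partFn ν γ (r n) x - g n x) ^ 2) ∂γ := by
            refine integral_mono habs_int ?_ hpt
            exact (integrable_const δ).add ((integrable_sq_diff (hπ n) (hr n) hνγ).const_mul _)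
        _ = δ * (γ Set.univ).toReal + δ⁻¹ * ∫ x, (partFn ν γ (r n) x - g n x) ^ 2 ∂γ := by
            rw [integral_add (integrable_const δ)
              ((integrable_sq_diff (hπ n) (hr n) hνγ).const_mul _),
              integral_const, integral_const_mul, measureReal_def, smul_eq_mul, mul_comm]
    have h5 : δ * (γ Set.univ).toReal < ε / 2 := by
      rw [hδ_def]
      rw [div_mul_eq_mul_div, div_lt_iff₀ (by positivity)]
      nlinarith
    have h6 : δ⁻¹ * ∫ x, (partFn ν γ (r n) x - g n x) ^ 2 ∂γ < ε / 2 := by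
      have h7 : (L - I n) / c < δ * (ε / 2) := by
        rw [div_lt_iff₀ hc]
        have := hN n hn
        nlinarith
      have h8 : δ⁻¹ * ∫ x, (partFn ν γ (r n) x - g n x) ^ 2 ∂γ ≤ δ⁻¹ * ((L - I n) / c) :=
        mul_le_mul_of_nonneg_left hsq_le (inv_pos.2 hδ).le
      have h9 : δ⁻¹ * ((L - I n) / c) < δ⁻¹ * (δ * (ε / 2)) :=
        (mul_lt_mul_iff_right₀ (inv_pos.2 hδ)).2 h7
      have h10 : δ⁻¹ * (δ * (ε / 2)) = ε / 2 := by
        field_simp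
      linarith
    linarith
  have hintA : ∀ A : Set Ω, MeasurableSet A → ∫ x in A, h x ∂γ = (ν A).toReal := by
    intro A hA
    have hDCT : Tendsto (fun n => ∫ x in A, g n x ∂γ) atTop (𝓝 (∫ x in A, h x ∂γ)) := by
      refine tendsto_integral_of_dominated_convergence (fun _ => (1 : ℝ))
        (fun n => ((partFn_measurable (hπ n)).aestronglyMeasurable).restrict)
        (integrable_const 1) (fun n => ae_of_all _ fun x => ?_)
        (ae_restrict_of_ae hconv)
      rw [Real.norm_eq_abs, abs_of_nonneg (partFn_nonneg ν γ (π n) x)]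
      exact partFn_le_one (hπ n) hνγ x
    exact tendsto_nhds_unique hDCT (hA_lim A hA)
  have hf_eq : h =ᵐ[γ] fun x => (ν.rnDeriv γ x).toReal := by
    refine ae_eq_of_forall_setIntegral_eq_of_sigmaFinite
      (fun s _ _ => hint_h.integrableOn)
      (fun s _ _ => (Measure.integrable_toReal_rnDeriv).integrableOn)
      (fun s hs _ => ?_)
    rw [hintA s hs, Measure.setIntegral_toReal_rnDeriv hνγac s, measureReal_def]
  have hconv_f : ∀ᵐ x ∂γ, Tendsto (fun n => g n x) atTop (𝓝 ((ν.rnDeriv γ x).toReal)) := by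
    filter_upwards [hconv, hf_eq] with x h1 h2
    rwa [h2] at h1
  -- the Radon-Nikodym derivative of ν with respect to μ
  have hrn : (fun x => ν.rnDeriv γ x / μ.rnDeriv γ x) =ᵐ[μ] ν.rnDeriv μ := by
    have hu_meas : Measurable (μ.rnDeriv γ) := Measure.measurable_rnDeriv μ γ
    have hv_meas : Measurable (ν.rnDeriv γ) := Measure.measurable_rnDeriv ν γ
    set T : Set Ω := {x | μ.rnDeriv γ x = 0} with hT_def
    have hT : MeasurableSet T := hu_meas (measurableSet_singleton 0)
    have hμT : μ T = 0 := by
      rw [← Measure.setLIntegral_rnDeriv hμγac T]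
      rw [setLIntegral_congr_fun hT (fun x (hx : μ.rnDeriv γ x = 0) => hx)]
      simp
    have hsing : (ν.restrict T) ⟂ₘ μ := by
      refine ⟨Tᶜ, hT.compl, ?_, ?_⟩
      · rw [Measure.restrict_apply hT.compl]
        simp
      · rwa [compl_compl]
    have hadd : ν = ν.restrict T + μ.withDensity (fun x => ν.rnDeriv γ x / μ.rnDeriv γ x) := by
      have hμ_eq : γ.withDensity (μ.rnDeriv γ) = μ := Measure.withDensity_rnDeriv_eq μ γ hμγac
      have hν_eq : γ.withDensity (ν.rnDeriv γ) = ν := Measure.withDensity_rnDeriv_eq ν γ hνγac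
      have hdiv_meas : Measurable (fun x => ν.rnDeriv γ x / μ.rnDeriv γ x) :=
        hv_meas.div hu_meas
      have step1 : μ.withDensity (fun x => ν.rnDeriv γ x / μ.rnDeriv γ x)
          = γ.withDensity (μ.rnDeriv γ * fun x => ν.rnDeriv γ x / μ.rnDeriv γ x) := by
        rw [withDensity_mul γ hu_meas hdiv_meas, hμ_eq]
      have step2 : (μ.rnDeriv γ * fun x => ν.rnDeriv γ x / μ.rnDeriv γ x)
          =ᵐ[γ] Tᶜ.indicator (ν.rnDeriv γ) := by
        filter_upwards [Measure.rnDeriv_lt_top μ γ] with x hx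
        simp only [Pi.mul_apply]
        by_cases hx0 : μ.rnDeriv γ x = 0
        · rw [hx0, zero_mul, Set.indicator_of_notMem (by simpa [hT_def] using hx0)]
        · rw [mul_comm, ENNReal.div_mul_cancel hx0 hx.ne,
            Set.indicator_of_mem (by simpa [hT_def] using hx0)]
      have step3 : γ.withDensity (Tᶜ.indicator (ν.rnDeriv γ)) = ν.restrict Tᶜ := by
        rw [withDensity_indicator hT.compl, ← restrict_withDensity hT.compl, hν_eq]
      rw [step1, withDensity_congr_ae step2, step3,
        Measure.restrict_add_restrict_compl hT]
    exact Measure.eq_rnDeriv (hv_meas.div hu_meas) hsing hadd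
  -- sum of derivatives is 1
  have huv1 : ∀ᵐ x ∂γ, μ.rnDeriv γ x + ν.rnDeriv γ x = 1 := by
    have h1 : γ.rnDeriv γ =ᵐ[γ] fun _ => 1 := Measure.rnDeriv_self γ
    have h2 : γ.rnDeriv γ =ᵐ[γ] μ.rnDeriv γ + ν.rnDeriv γ := by
      rw [hγ_def]
      exact Measure.rnDeriv_add μ ν γ
    filter_upwards [h1, h2] with x hx1 hx2
    simp only [Pi.add_apply] at hx2
    rw [← hx2, hx1]
  -- the bad set of cells with μ-measure zero
  set Bad : Set Ω := ⋃ n, ⋃ A ∈ ((π n).filter fun A => μ A = 0), A with hBad_def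
  have hBad : μ Bad = 0 := by
    refine measure_iUnion_null fun n => ?_
    refine le_antisymm ?_ zero_le
    refine le_trans (measure_biUnion_finset_le _ _) ?_
    rw [Finset.sum_eq_zero]
    intro A hA
    exact (Finset.mem_filter.1 hA).2
  have hBad' : ∀ᵐ x ∂μ, x ∉ Bad := by
    rw [ae_iff]
    simpa using hBad
  -- conclusion
  filter_upwards [hμγac.ae_le hconv_f, hBad', hrn,
    Measure.rnDeriv_pos hμγac, hμγac.ae_le (Measure.rnDeriv_lt_top μ γ),
    hμγac.ae_le (Measure.rnDeriv_lt_top ν γ), hμγac.ae_le huv1]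
    with x hx_conv hx_bad hx_rn hx_pos hx_ult hx_vlt hx_uv
  set fx : ℝ := (ν.rnDeriv γ x).toReal with hfx_def
  set ux : ℝ := (μ.rnDeriv γ x).toReal with hux_def
  have hux_pos : 0 < ux := ENNReal.toReal_pos hx_pos.ne' hx_ult.ne
  have hfx_nonneg : 0 ≤ fx := ENNReal.toReal_nonneg
  have hsum : ux + fx = 1 := by
    rw [hux_def, hfx_def, ← ENNReal.toReal_add hx_ult.ne hx_vlt.ne, hx_uv, ENNReal.toReal_one]
  have hfx_lt1 : fx < 1 := by linarith
  have htarget : (ν.rnDeriv μ x).toReal = fx / (1 - fx) := by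
    rw [← hx_rn, ENNReal.toReal_div, ← hfx_def, ← hux_def]
    congr 1
    linarith
  have hcell : ∀ n, partFn ν μ (π n) x = g n x / (1 - g n x) := by
    intro n
    obtain ⟨A, hA, hxA⟩ := exists_mem_cell (hπ n) x
    have hμA : μ A ≠ 0 := by
      intro h0
      refine hx_bad (Set.mem_iUnion.2 ⟨n, ?_⟩)
      exact Set.mem_biUnion (Finset.mem_filter.2 ⟨hA, h0⟩) hxA
    have hγA : γ A ≠ 0 := fun h0 => hμA (le_antisymm (h0 ▸ hμγ A) zero_le)
    simp only [hg_def]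
    rw [partFn_eq (hπ n) hA hxA, if_pos hμA, partFn_eq (hπ n) hA hxA, if_pos hγA]
    have hγA_val : (γ A).toReal = (μ A).toReal + (ν A).toReal := by
      rw [hγ_def, Measure.add_apply]
      exact ENNReal.toReal_add (measure_ne_top μ A) (measure_ne_top ν A)
    set b : ℝ := (μ A).toReal with hb_def
    set a : ℝ := (ν A).toReal with ha_def
    have hb : 0 < b := ENNReal.toReal_pos hμA (measure_ne_top μ A)
    have ha : 0 ≤ a := ENNReal.toReal_nonneg
    have hba : 0 < b + a := by linarith
    rw [hγA_val]
    have h1 : 1 - a / (b + a) = b / (b + a) := by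
      field_simp
      ring
    rw [h1, div_div_div_cancel_right₀]
    exact hba.ne'
  have hne : 1 - fx ≠ 0 := by linarith
  have hconv2 : Tendsto (fun n => g n x / (1 - g n x)) atTop (𝓝 (fx / (1 - fx))) :=
    Tendsto.div hx_conv (tendsto_const_nhds.sub hx_conv) hne
  rw [htarget]
  exact hconv2.congr fun n => (hcell n).symm
end

section
/- Assume ν ≪ μ. Let γ := μ + ν, and let (π_n)_{n∈ℕ} be an increasing sequence of finite measurable partitions of Ω (π_{n+1} refines π_n) chosen so that sup_n ∫_Ω e^{−f_{π_n}(γ)} dγ = sup_π ∫_Ω e^{−f_π(γ)} dγ, the supremum on the right being over all finite measurable partitions π. Then f_{π_n}(μ) converges to dν/dμ in L¹(μ) as n → ∞. -/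
open MeasureTheory Filter Set
open scoped ENNReal Topology Classical

section Partition

variable {Ω : Type*} [MeasurableSpace Ω] {ν lam : Measure Ω} {π : Finset (Set Ω)}

lemma IsFinitePartition.exists_mem (hπ : IsFinitePartition π) (x : Ω) : ∃ A ∈ π, x ∈ A := by
  have : x ∈ ⋃₀ (π : Set (Set Ω)) := hπ.2.2 ▸ Set.mem_univ x
  simpa using this

lemma partFn_eq_of_mem (hπ : IsFinitePartition π) {A : Set Ω} (hA : A ∈ π) {x : Ω}
    (hx : x ∈ A) :
    partFn ν lam π x = if lam A ≠ 0 then (ν A).toReal / (lam A).toReal else 0 := by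
  unfold partFn
  rw [Finset.sum_eq_single_of_mem A hA]
  · by_cases h : lam A ≠ 0 <;> simp [h, hx]
  · intro B hB hBA
    have hdisj : Disjoint B A := hπ.2.1 hB hA hBA
    have hxB : x ∉ B := fun hxB => (Set.disjoint_left.mp hdisj hxB) hx
    simp [hxB]

lemma partFn_nonneg (x : Ω) : 0 ≤ partFn ν lam π x := by
  unfold partFn
  refine Finset.sum_nonneg fun A _ => ?_
  split
  · positivity
  · exact le_refl 0

lemma partFn_eq_sum_indicator :
    partFn ν lam π = fun x => ∑ A ∈ π,
      Set.indicator A (fun _ => if lam A ≠ 0 then (ν A).toReal / (lam A).toReal else 0) x := by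
  funext x
  unfold partFn
  refine Finset.sum_congr rfl fun A _ => ?_
  by_cases hx : x ∈ A <;> by_cases h : lam A ≠ 0 <;> simp [Set.indicator, hx, h]

lemma measurable_partFn (hπ : IsFinitePartition π) : Measurable (partFn ν lam π) := by
  rw [partFn_eq_sum_indicator]
  exact Finset.measurable_sum _ fun A hA => measurable_const.indicator (hπ.1 A hA)

lemma integrable_partFn (hπ : IsFinitePartition π) (κ : Measure Ω) [IsFiniteMeasure κ] :
    Integrable (partFn ν lam π) κ := by
  rw [partFn_eq_sum_indicator]
  exact integrable_finset_sum _ fun A hA => (integrable_const _).indicator (hπ.1 A hA)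

lemma partFn_le_one [IsFiniteMeasure lam] (hν : ν ≤ lam) (hπ : IsFinitePartition π) (x : Ω) :
    partFn ν lam π x ≤ 1 := by
  obtain ⟨A, hA, hx⟩ := hπ.exists_mem x
  rw [partFn_eq_of_mem hπ hA hx]
  split
  · rename_i h
    rw [div_le_one (ENNReal.toReal_pos h (measure_ne_top lam A))]
    exact ENNReal.toReal_mono (measure_ne_top lam A) (hν A)
  · exact zero_le_one

lemma setIntegral_partFn [IsFiniteMeasure lam] [IsFiniteMeasure ν]
    (hπ : IsFinitePartition π) (hac : ∀ A : Set Ω, lam A = 0 → ν A = 0)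
    {A : Set Ω} (hA : A ∈ π) :
    ∫ x in A, partFn ν lam π x ∂lam = (ν A).toReal := by
  by_cases h : lam A = 0
  · rw [Measure.restrict_eq_zero.mpr h, integral_zero_measure, hac A h]
    simp
  · rw [setIntegral_congr_fun (hπ.1 A hA)
      (fun x hx => (partFn_eq_of_mem hπ hA hx).trans (if_pos h)),
      setIntegral_const, smul_eq_mul, measureReal_def, mul_div_cancel₀]
    exact ENNReal.toReal_ne_zero.mpr ⟨h, measure_ne_top lam A⟩

lemma integral_partition (hπ : IsFinitePartition π) {f : Ω → ℝ} (hf : Integrable f lam) :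
    ∫ x, f x ∂lam = ∑ A ∈ π, ∫ x in A, f x ∂lam := by
  have huniv : (Set.univ : Set Ω) = ⋃ A ∈ π, A := by
    rw [← hπ.2.2, Set.sUnion_eq_biUnion]
    simp
  rw [← setIntegral_univ, huniv]
  exact integral_biUnion_finset π (fun A hA => hπ.1 A hA) hπ.2.1
    (fun A _ => hf.integrableOn)

end Partition

lemma expAux_hasDeriv (u : ℝ) :
    HasDerivAt (fun x : ℝ => Real.exp (-x)) (-Real.exp (-u)) u := by
  exact ((Real.hasDerivAt_exp (-u)).comp u ((hasDerivAt_id u).neg)).congr_deriv (by simp)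

/-- `exp (-u) ≤ 1 - u + u^2/2` for `u ≥ 0`. -/
lemma exp_neg_le_quadratic {u : ℝ} (hu : 0 ≤ u) :
    Real.exp (-u) ≤ 1 - u + u ^ 2 / 2 := by
  set H : ℝ → ℝ := fun x => 1 - x + x ^ 2 / 2 - Real.exp (-x) with hHdef
  have hderiv : ∀ x : ℝ, HasDerivAt H (-1 + x + Real.exp (-x)) x := by
    intro x
    have h1 : HasDerivAt (fun y : ℝ => 1 - y + y ^ 2 / 2) (-1 + x) x := by
      have := ((hasDerivAt_const x (1:ℝ)).sub (hasDerivAt_id x)).add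
        ((hasDerivAt_pow 2 x).div_const 2)
      refine this.congr_deriv ?_
      norm_num
    have := h1.sub (expAux_hasDeriv x)
    refine this.congr_deriv ?_
    ring
  have hmono : Monotone H := by
    refine monotone_of_deriv_nonneg (fun x => (hderiv x).differentiableAt) ?_
    intro x
    rw [(hderiv x).deriv]
    nlinarith [Real.add_one_le_exp (-x)]
  have h0 : H 0 = 0 := by simp [hHdef]
  have := hmono hu
  rw [h0] at this
  simpa [hHdef] using this

/-- `1 - u + u^2/2 - u^3/6 ≤ exp (-u)` for `u ≥ 0`. -/
lemma cubic_le_exp_neg {u : ℝ} (hu : 0 ≤ u) :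
    1 - u + u ^ 2 / 2 - u ^ 3 / 6 ≤ Real.exp (-u) := by
  set G : ℝ → ℝ := fun x => Real.exp (-x) - 1 + x - x ^ 2 / 2 + x ^ 3 / 6 with hGdef
  have hderiv : ∀ x : ℝ, HasDerivAt G (-Real.exp (-x) + 1 - x + x ^ 2 / 2) x := by
    intro x
    have := (((expAux_hasDeriv x).sub (hasDerivAt_const x (1:ℝ))).add (hasDerivAt_id x)).sub
      ((hasDerivAt_pow 2 x).div_const 2) |>.add ((hasDerivAt_pow 3 x).div_const 6)
    refine this.congr_deriv ?_
    norm_num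
    ring
  have hmono : MonotoneOn G (Ici (0:ℝ)) := by
    refine monotoneOn_of_deriv_nonneg (convex_Ici 0)
      (fun x _ => (hderiv x).differentiableAt.continuousAt.continuousWithinAt)
      (fun x _ => (hderiv x).differentiableAt.differentiableWithinAt) ?_
    intro x hx
    rw [interior_Ici] at hx
    rw [(hderiv x).deriv]
    nlinarith [exp_neg_le_quadratic (le_of_lt hx)]
  have h0 : G 0 = 0 := by simp [hGdef]
  have := hmono (self_mem_Ici) (mem_Ici.mpr hu) hu
  rw [h0] at this
  simp only [hGdef] at this
  linarith

/-- quadratic lower bound `exp(-u) - 1 + u ≥ exp(-1)/2 * u^2` on `[-1,1]`. -/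
lemma exp_neg_sub_one_add_ge {u : ℝ} (h1 : -1 ≤ u) (h2 : u ≤ 1) :
    Real.exp (-1) / 2 * u ^ 2 ≤ Real.exp (-u) - 1 + u := by
  have he1 : Real.exp (-1 : ℝ) ≤ 2/3 := by
    rw [Real.exp_neg]
    have h32 : (3:ℝ)/2 ≤ Real.exp 1 := by nlinarith [Real.add_one_le_exp (1:ℝ)]
    calc (Real.exp 1)⁻¹ ≤ ((3:ℝ)/2)⁻¹ := by
          exact inv_anti₀ (by norm_num) h32
      _ = 2/3 := by norm_num
  have he0 : (0:ℝ) < Real.exp (-1) := Real.exp_pos _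
  rcases le_total 0 u with hu | hu
  · have := cubic_le_exp_neg hu
    nlinarith [sq_nonneg u, pow_le_pow_left₀ hu h2 2]
  · -- u ≤ 0 : use exp x ≥ 1 + x + x^2/2 for x = -u ≥ 0
    have hx : 0 ≤ -u := by linarith
    have hsum := Real.sum_le_exp_of_nonneg hx 3
    have : 1 + (-u) + (-u) ^ 2 / 2 ≤ Real.exp (-u) := by
      have e : ∑ i ∈ Finset.range 3, (-u) ^ i / (Nat.factorial i : ℝ)
          = 1 + (-u) + (-u) ^ 2 / 2 := by
        simp [Finset.sum_range_succ, Nat.factorial]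
      rw [e] at hsum
      exact hsum
    nlinarith [sq_nonneg u]

/-- Key Taylor-type inequality: for `s, t ∈ [0,1]`,
`exp(-s) - exp(-s)(t-s) + (exp(-2)/2)(t-s)^2 ≤ exp(-t)`. -/
lemma key_taylor {s t : ℝ} (hs0 : 0 ≤ s) (hs1 : s ≤ 1) (ht0 : 0 ≤ t) (ht1 : t ≤ 1) :
    Real.exp (-s) - Real.exp (-s) * (t - s) + Real.exp (-2) / 2 * (t - s) ^ 2
      ≤ Real.exp (-t) := by
  set u := t - s with hu
  have hu1 : -1 ≤ u := by simp [hu]; linarith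
  have hu2 : u ≤ 1 := by simp [hu]; linarith
  have hkey := exp_neg_sub_one_add_ge hu1 hu2
  have hst : Real.exp (-t) = Real.exp (-s) * Real.exp (-u) := by
    rw [← Real.exp_add, hu]; ring_nf
  have hs_lb : Real.exp (-1) ≤ Real.exp (-s) := Real.exp_le_exp.mpr (by linarith)
  have h2 : Real.exp (-2 : ℝ) = Real.exp (-1) * Real.exp (-1) := by
    rw [← Real.exp_add]; norm_num
  have he0 : (0:ℝ) < Real.exp (-1) := Real.exp_pos _
  have hs0' : (0:ℝ) < Real.exp (-s) := Real.exp_pos _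
  rw [hst]
  have hA : Real.exp (-s) * (Real.exp (-1)/2 * u^2) ≤ Real.exp (-s) * (Real.exp (-u) - 1 + u) :=
    mul_le_mul_of_nonneg_left hkey hs0'.le
  have hB : Real.exp (-1) * (Real.exp (-1)/2 * u^2) ≤ Real.exp (-s) * (Real.exp (-1)/2 * u^2) :=
    mul_le_mul_of_nonneg_right hs_lb (by positivity)
  have hC : Real.exp (-1) * (Real.exp (-1)/2 * u^2) = Real.exp (-2)/2 * u^2 := by
    rw [h2]; ring
  nlinarith [hA, hB, hC]

/-- tangent line inequality: `exp(-s)(1 - (t-s)) ≤ exp(-t)` for all reals. -/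
lemma tangent_line (s t : ℝ) :
    Real.exp (-s) - Real.exp (-s) * (t - s) ≤ Real.exp (-t) := by
  have h := Real.add_one_le_exp (s - t)
  have hst : Real.exp (-t) = Real.exp (-s) * Real.exp (s - t) := by
    rw [← Real.exp_add]; ring_nf
  have hs0 : (0:ℝ) < Real.exp (-s) := Real.exp_pos _
  rw [hst]
  nlinarith

/-- Lipschitz-type bound: `exp(-b) - |a - b| ≤ exp (-a)` for `a, b ≥ 0`. -/
lemma exp_neg_lip {a b : ℝ} (ha : 0 ≤ a) (hb : 0 ≤ b) :
    Real.exp (-b) - |a - b| ≤ Real.exp (-a) := by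
  rcases le_total a b with h | h
  · have : Real.exp (-b) ≤ Real.exp (-a) := Real.exp_le_exp.mpr (by linarith)
    have : 0 ≤ |a - b| := abs_nonneg _
    linarith
  · rw [abs_of_nonneg (by linarith)]
    have h1 := Real.add_one_le_exp (b - a)
    have h2 : Real.exp (-b) ≤ 1 := Real.exp_le_one_iff.mpr (by linarith)
    have h3 : Real.exp (-b) * Real.exp (b - a) = Real.exp (-a) := by
      rw [← Real.exp_add]; ring_nf
    have h4 : (0:ℝ) < Real.exp (-b) := Real.exp_pos _
    nlinarith

section MT

variable {Ω : Type*} [MeasurableSpace Ω] {μ ν : Measure Ω}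
  [IsFiniteMeasure μ] [IsFiniteMeasure ν]

lemma nu_ac_gamma : ν ≪ μ + ν :=
  Measure.absolutelyContinuous_of_le (Measure.le_add_left le_rfl)

lemma mu_ac_gamma : μ ≪ μ + ν :=
  Measure.absolutelyContinuous_of_le (Measure.le_add_right le_rfl)

/-- ρ < 1 a.e. w.r.t. γ = μ + ν, when ν ≪ μ. -/
lemma rnDeriv_lt_one (hac : ν ≪ μ) :
    ∀ᵐ x ∂(μ + ν), ν.rnDeriv (μ + ν) x < 1 := by
  set γ := μ + ν with hγ
  set S : Set Ω := {x | 1 ≤ ν.rnDeriv γ x} with hS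
  have hSm : MeasurableSet S := measurableSet_le measurable_const (ν.measurable_rnDeriv γ)
  have hνS : ν S = ∫⁻ x in S, ν.rnDeriv γ x ∂γ :=
    (Measure.setLIntegral_rnDeriv (nu_ac_gamma) S).symm
  have hγS : γ S ≤ ν S := by
    rw [hνS]
    calc γ S = ∫⁻ _ in S, 1 ∂γ := by simp
    _ ≤ ∫⁻ x in S, ν.rnDeriv γ x ∂γ := by
        refine setLIntegral_mono (ν.measurable_rnDeriv γ) fun x hx => hx
  have hμS : μ S = 0 := by
    have h1 : μ S + ν S ≤ 0 + ν S := by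
      rw [zero_add]
      calc μ S + ν S = γ S := rfl
      _ ≤ ν S := hγS
    have := (ENNReal.add_le_add_iff_right (measure_ne_top ν S)).mp h1
    exact le_antisymm this zero_le
  have hνS0 : ν S = 0 := hac hμS
  have hγS0 : γ S = 0 := by
    show μ S + ν S = 0
    rw [hμS, hνS0, add_zero]
  rw [ae_iff]
  convert hγS0 using 2
  ext x
  simp [hS, not_lt]

lemma rnDeriv_mu_eq (hac : ν ≪ μ) :
    ∀ᵐ x ∂μ, (ν.rnDeriv μ x).toReal
      = (ν.rnDeriv (μ + ν) x).toReal / (1 - (ν.rnDeriv (μ + ν) x).toReal) := by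
  set γ := μ + ν with hγ
  have h1 : ν.rnDeriv γ * γ.rnDeriv μ =ᵐ[μ] ν.rnDeriv μ :=
    Measure.rnDeriv_mul_rnDeriv nu_ac_gamma
  have h2 : (μ.rnDeriv γ)⁻¹ =ᵐ[μ] γ.rnDeriv μ := Measure.inv_rnDeriv mu_ac_gamma
  have h3γ : ∀ᵐ x ∂γ, μ.rnDeriv γ x + ν.rnDeriv γ x = 1 := by
    have ha : γ.rnDeriv γ =ᵐ[γ] fun _ => 1 := Measure.rnDeriv_self γ
    have hb : γ.rnDeriv γ =ᵐ[γ] μ.rnDeriv γ + ν.rnDeriv γ := Measure.rnDeriv_add μ ν γ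
    filter_upwards [ha, hb] with x hxa hxb
    have := hxb.symm.trans hxa
    simpa using this
  have h3 : ∀ᵐ x ∂μ, μ.rnDeriv γ x + ν.rnDeriv γ x = 1 :=
    (mu_ac_gamma (μ := μ) (ν := ν)).ae_le h3γ
  have h4 : ∀ᵐ x ∂μ, ν.rnDeriv γ x < 1 :=
    (mu_ac_gamma (μ := μ) (ν := ν)).ae_le (rnDeriv_lt_one hac)
  filter_upwards [h1, h2, h3, h4] with x hx1 hx2 hx3 hx4
  have hne : ν.rnDeriv γ x ≠ ∞ := (hx4.trans ENNReal.one_lt_top).ne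
  have hsub : 1 - ν.rnDeriv γ x = μ.rnDeriv γ x :=
    ENNReal.sub_eq_of_eq_add hne (by rw [← hx3, add_comm])
  have hval : ν.rnDeriv μ x = ν.rnDeriv γ x * (1 - ν.rnDeriv γ x)⁻¹ := by
    rw [hsub, ← hx1, Pi.mul_apply, ← hx2, Pi.inv_apply]
  rw [hval, ENNReal.toReal_mul, ENNReal.toReal_inv,
    ENNReal.toReal_sub_of_le hx4.le ENNReal.one_ne_top, ENNReal.toReal_one, div_eq_mul_inv]

lemma partFn_mu_eq (hac : ν ≪ μ) {π : Finset (Set Ω)} (hπ : IsFinitePartition π) (x : Ω) :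
    partFn ν μ π x = partFn ν (μ + ν) π x / (1 - partFn ν (μ + ν) π x) := by
  obtain ⟨A, hA, hx⟩ := hπ.exists_mem x
  rw [partFn_eq_of_mem hπ hA hx, partFn_eq_of_mem hπ hA hx]
  have hadd : (μ + ν) A = μ A + ν A := by simp
  by_cases hμA : μ A = 0
  · have hνA : ν A = 0 := hac hμA
    have hγA : (μ + ν) A = 0 := by rw [hadd, hμA, hνA, add_zero]
    simp [hμA, hγA, hνA]
  · have hγA : (μ + ν) A ≠ 0 := by
      rw [hadd]
      intro h
      exact hμA (by simpa using (add_eq_zero.mp h).1)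
    rw [if_pos hμA, if_pos hγA]
    have hm : (μ A).toReal ≠ 0 := ENNReal.toReal_ne_zero.mpr ⟨hμA, measure_ne_top μ A⟩
    have hgm : ((μ + ν) A).toReal = (μ A).toReal + (ν A).toReal := by
      rw [hadd, ENNReal.toReal_add (measure_ne_top μ A) (measure_ne_top ν A)]
    have hgm0 : ((μ + ν) A).toReal ≠ 0 := ENNReal.toReal_ne_zero.mpr ⟨hγA, measure_ne_top _ A⟩
    have hsum : (ν A).toReal / ((μ + ν) A).toReal + (μ A).toReal / ((μ + ν) A).toReal = 1 := by
      rw [← add_div, div_eq_one_iff_eq hgm0]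
      linarith [hgm]
    have h1 : 1 - (ν A).toReal / ((μ + ν) A).toReal = (μ A).toReal / ((μ + ν) A).toReal := by
      linarith [hsum]
    rw [h1]
    rw [div_div_div_cancel_right₀]
    exact hgm0

lemma nu_zero_of_gamma_zero : ∀ A : Set Ω, (μ + ν) A = 0 → ν A = 0 := by
  intro A h
  have : μ A + ν A = 0 := by simpa using h
  exact (add_eq_zero.mp this).2

lemma exp_neg_partFn_integrable (hπ : IsFinitePartition π) (κ : Measure Ω) [IsFiniteMeasure κ] :
    Integrable (fun x => Real.exp (-(partFn ν (μ + ν) π x))) κ := by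
  refine Integrable.mono' (integrable_const 1)
    ((measurable_partFn hπ).neg.exp.aestronglyMeasurable) ?_
  refine ae_of_all _ fun x => ?_
  rw [Real.norm_eq_abs, abs_of_pos (Real.exp_pos _)]
  exact Real.exp_le_one_iff.mpr (neg_nonpos.mpr (partFn_nonneg x))

/-- atom-wise vanishing of the linear term. -/
lemma integral_exp_mul_sub (hπ : IsFinitePartition π) {u : Ω → ℝ}
    (hu_int : Integrable u (μ + ν))
    (hu : ∀ A ∈ π, ∫ x in A, u x ∂(μ + ν) = (ν A).toReal) :
    ∫ x, Real.exp (-(partFn ν (μ + ν) π x)) * (u x - partFn ν (μ + ν) π x) ∂(μ + ν) = 0 := by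
  set γ := μ + ν with hγdef
  have hf_int : Integrable (partFn ν γ π) γ := integrable_partFn hπ γ
  have hint : Integrable
      (fun x => Real.exp (-(partFn ν γ π x)) * (u x - partFn ν γ π x)) γ := by
    refine Integrable.bdd_mul (hu_int.sub hf_int)
      ((measurable_partFn hπ).neg.exp.aestronglyMeasurable) (c := 1) (ae_of_all _ fun x => ?_)
    rw [Real.norm_eq_abs, abs_of_pos (Real.exp_pos _)]
    exact Real.exp_le_one_iff.mpr (neg_nonpos.mpr (partFn_nonneg x))
  rw [integral_partition hπ hint]
  refine Finset.sum_eq_zero fun A hA => ?_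
  by_cases h : γ A = 0
  · rw [Measure.restrict_eq_zero.mpr h, integral_zero_measure]
  · set c : ℝ := (ν A).toReal / (γ A).toReal with hcdef
    have hcongr : ∀ x ∈ A, Real.exp (-(partFn ν γ π x)) * (u x - partFn ν γ π x)
        = Real.exp (-c) * (u x - c) := fun x hx => by
      rw [partFn_eq_of_mem hπ hA hx, if_pos h]
    rw [setIntegral_congr_fun (hπ.1 A hA) hcongr, integral_const_mul,
      integral_sub (hu_int.integrableOn)
        (integrableOn_const (measure_ne_top _ A)),
      hu A hA, setIntegral_const, smul_eq_mul, measureReal_def, hcdef,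
      mul_div_cancel₀ _ (ENNReal.toReal_ne_zero.mpr ⟨h, measure_ne_top γ A⟩), sub_self, mul_zero]

lemma sq_sub_integrable (hπ : IsFinitePartition π) :
    Integrable (fun x => ((ν.rnDeriv (μ + ν) x).toReal - partFn ν (μ + ν) π x) ^ 2) (μ + ν) := by
  set γ := μ + ν with hγdef
  have hgb : ∀ᵐ x ∂γ, (ν.rnDeriv γ x).toReal ≤ 1 := by
    filter_upwards [Measure.rnDeriv_le_one_of_le (Measure.le_add_left le_rfl : ν ≤ γ)]
      with x hx
    calc (ν.rnDeriv γ x).toReal ≤ (1 : ℝ≥0∞).toReal :=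
      ENNReal.toReal_mono ENNReal.one_ne_top hx
    _ = 1 := by simp
  refine Integrable.mono' (integrable_const 1)
    (((ν.measurable_rnDeriv γ).ennreal_toReal.sub (measurable_partFn hπ)).pow_const 2
      |>.aestronglyMeasurable) ?_
  filter_upwards [hgb] with x hx
  have h1 : 0 ≤ (ν.rnDeriv γ x).toReal := ENNReal.toReal_nonneg
  have h2 : 0 ≤ partFn ν γ π x := partFn_nonneg x
  have h3 : partFn ν γ π x ≤ 1 := partFn_le_one (Measure.le_add_left le_rfl) hπ x
  rw [Real.norm_eq_abs, abs_of_nonneg (sq_nonneg _)]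
  nlinarith

/-- key integral inequality with quadratic gain. -/
lemma key_integral_ineq (hπ : IsFinitePartition π) :
    ∫ x, Real.exp (-(partFn ν (μ + ν) π x)) ∂(μ + ν)
      + Real.exp (-2) / 2
        * ∫ x, ((ν.rnDeriv (μ + ν) x).toReal - partFn ν (μ + ν) π x) ^ 2 ∂(μ + ν)
      ≤ ∫ x, Real.exp (-(ν.rnDeriv (μ + ν) x).toReal) ∂(μ + ν) := by
  set γ := μ + ν with hγdef
  set g : Ω → ℝ := fun x => (ν.rnDeriv γ x).toReal with hgdef
  set f : Ω → ℝ := fun x => partFn ν γ π x with hfdef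
  have hg_int : Integrable g γ := Measure.integrable_toReal_rnDeriv
  have hf_int : Integrable f γ := integrable_partFn hπ γ
  have hgb : ∀ᵐ x ∂γ, g x ≤ 1 := by
    filter_upwards [Measure.rnDeriv_le_one_of_le (Measure.le_add_left le_rfl : ν ≤ γ)]
      with x hx
    calc g x ≤ (1 : ℝ≥0∞).toReal := ENNReal.toReal_mono ENNReal.one_ne_top hx
    _ = 1 := by simp
  have hexpf : Integrable (fun x => Real.exp (-(f x))) γ := exp_neg_partFn_integrable hπ γ
  have hexpg : Integrable (fun x => Real.exp (-(g x))) γ := by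
    refine Integrable.mono' (integrable_const 1)
      ((ν.measurable_rnDeriv γ).ennreal_toReal.neg.exp.aestronglyMeasurable) ?_
    refine ae_of_all _ fun x => ?_
    rw [Real.norm_eq_abs, abs_of_pos (Real.exp_pos _)]
    exact Real.exp_le_one_iff.mpr (neg_nonpos.mpr ENNReal.toReal_nonneg)
  have hmul : Integrable (fun x => Real.exp (-(f x)) * (g x - f x)) γ := by
    refine Integrable.bdd_mul (hg_int.sub hf_int)
      ((measurable_partFn hπ).neg.exp.aestronglyMeasurable) (c := 1) (ae_of_all _ fun x => ?_)
    rw [Real.norm_eq_abs, abs_of_pos (Real.exp_pos _)]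
    exact Real.exp_le_one_iff.mpr (neg_nonpos.mpr (partFn_nonneg x))
  have hsq : Integrable (fun x => (g x - f x) ^ 2) γ := sq_sub_integrable hπ
  have hmono : ∫ x, (Real.exp (-(f x)) - Real.exp (-(f x)) * (g x - f x)
      + Real.exp (-2) / 2 * (g x - f x) ^ 2) ∂γ ≤ ∫ x, Real.exp (-(g x)) ∂γ := by
    refine integral_mono_ae ((hexpf.sub hmul).add (hsq.const_mul _)) hexpg ?_
    filter_upwards [hgb] with x hx
    exact key_taylor (partFn_nonneg x) (partFn_le_one (Measure.le_add_left le_rfl) hπ x)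
      ENNReal.toReal_nonneg hx
  have hzero : ∫ x, Real.exp (-(f x)) * (g x - f x) ∂γ = 0 := by
    refine integral_exp_mul_sub hπ hg_int fun A _ => ?_
    exact Measure.setIntegral_toReal_rnDeriv nu_ac_gamma A
  have h1 := integral_add (μ := γ) (hexpf.sub hmul) (hsq.const_mul (Real.exp (-2) / 2))
  simp only [Pi.add_apply, Pi.sub_apply] at h1
  rw [h1] at hmono
  have h2 := integral_sub hexpf hmul
  rw [h2, hzero, sub_zero, integral_const_mul] at hmono
  exact hmono

/-- upper bound over any partition. -/
lemma integral_exp_le (hπ : IsFinitePartition π) :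
    ∫ x, Real.exp (-(partFn ν (μ + ν) π x)) ∂(μ + ν)
      ≤ ∫ x, Real.exp (-(ν.rnDeriv (μ + ν) x).toReal) ∂(μ + ν) := by
  have h := key_integral_ineq (μ := μ) (ν := ν) hπ
  have hq : 0 ≤ ∫ x, ((ν.rnDeriv (μ + ν) x).toReal - partFn ν (μ + ν) π x) ^ 2 ∂(μ + ν) :=
    integral_nonneg fun x => sq_nonneg _
  nlinarith [Real.exp_pos (-2 : ℝ)]

variable {π' : Finset (Set Ω)}

lemma setIntegral_partFn_of_refines (hπ : IsFinitePartition π) (hπ' : IsFinitePartition π')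
    (href : Refines π' π) {A : Set Ω} (hA : A ∈ π) :
    ∫ x in A, partFn ν (μ + ν) π' x ∂(μ + ν) = (ν A).toReal := by
  obtain ⟨S, hS, hAS⟩ := href A hA
  have hSm : ∀ B ∈ S, MeasurableSet B := fun B hB => hπ'.1 B (hS hB)
  have hSd : (↑S : Set (Set Ω)).PairwiseDisjoint id :=
    hπ'.2.1.subset (by exact_mod_cast hS)
  have hbi : A = ⋃ B ∈ S, B := by rw [hAS, Set.sUnion_eq_biUnion]; simp
  conv_lhs => rw [hbi]
  rw [integral_biUnion_finset S hSm hSd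
    (fun B _ => (integrable_partFn hπ' (μ + ν)).integrableOn)]
  calc ∑ B ∈ S, ∫ x in B, partFn ν (μ + ν) π' x ∂(μ + ν)
      = ∑ B ∈ S, (ν B).toReal := Finset.sum_congr rfl fun B hB =>
        setIntegral_partFn hπ' nu_zero_of_gamma_zero (hS hB)
    _ = (∑ B ∈ S, ν B).toReal := (ENNReal.toReal_sum fun B _ => measure_ne_top ν B).symm
    _ = (ν A).toReal := by
        rw [hbi]
        congr 1
        exact (measure_biUnion_finset hSd hSm).symm

lemma integral_exp_mono_refines (hπ : IsFinitePartition π) (hπ' : IsFinitePartition π')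
    (href : Refines π' π) :
    ∫ x, Real.exp (-(partFn ν (μ + ν) π x)) ∂(μ + ν)
      ≤ ∫ x, Real.exp (-(partFn ν (μ + ν) π' x)) ∂(μ + ν) := by
  set γ := μ + ν with hγdef
  have hf'_int : Integrable (partFn ν γ π') γ := integrable_partFn hπ' γ
  have hexpf : Integrable (fun x => Real.exp (-(partFn ν γ π x))) γ :=
    exp_neg_partFn_integrable hπ γ
  have hmul : Integrable
      (fun x => Real.exp (-(partFn ν γ π x)) * (partFn ν γ π' x - partFn ν γ π x)) γ := by
    refine Integrable.bdd_mul (hf'_int.sub (integrable_partFn hπ γ))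
      ((measurable_partFn hπ).neg.exp.aestronglyMeasurable) (c := 1) (ae_of_all _ fun x => ?_)
    rw [Real.norm_eq_abs, abs_of_pos (Real.exp_pos _)]
    exact Real.exp_le_one_iff.mpr (neg_nonpos.mpr (partFn_nonneg x))
  have hzero : ∫ x, Real.exp (-(partFn ν γ π x))
      * (partFn ν γ π' x - partFn ν γ π x) ∂γ = 0 :=
    integral_exp_mul_sub hπ hf'_int fun A hA =>
      setIntegral_partFn_of_refines hπ hπ' href hA
  have hmono : ∫ x, (Real.exp (-(partFn ν γ π x))
      - Real.exp (-(partFn ν γ π x)) * (partFn ν γ π' x - partFn ν γ π x)) ∂γ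
      ≤ ∫ x, Real.exp (-(partFn ν γ π' x)) ∂γ :=
    integral_mono_ae (hexpf.sub hmul) (exp_neg_partFn_integrable hπ' γ)
      (ae_of_all _ fun x => tangent_line _ _)
  have h2 := integral_sub hexpf hmul
  rw [h2, hzero, sub_zero] at hmono
  exact hmono

lemma exp_neg_g_integrable :
    Integrable (fun x => Real.exp (-(ν.rnDeriv (μ + ν) x).toReal)) (μ + ν) := by
  refine Integrable.mono' (integrable_const 1)
    ((ν.measurable_rnDeriv (μ + ν)).ennreal_toReal.neg.exp.aestronglyMeasurable) ?_
  refine ae_of_all _ fun x => ?_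
  rw [Real.norm_eq_abs, abs_of_pos (Real.exp_pos _)]
  exact Real.exp_le_one_iff.mpr (neg_nonpos.mpr ENNReal.toReal_nonneg)

lemma exists_partition_close (hac : ν ≪ μ) {ε : ℝ} (hε : 0 < ε) :
    ∃ p : Finset (Set Ω), IsFinitePartition p ∧
      ∫ x, Real.exp (-(ν.rnDeriv (μ + ν) x).toReal) ∂(μ + ν) - ε
        ≤ ∫ x, Real.exp (-(partFn ν (μ + ν) p x)) ∂(μ + ν) := by
  set γ := μ + ν with hγdef
  set g : Ω → ℝ := fun x => (ν.rnDeriv γ x).toReal with hgdef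
  have hgmeas : Measurable g := (ν.measurable_rnDeriv γ).ennreal_toReal
  have hg0 : ∀ x, 0 ≤ g x := fun x => ENNReal.toReal_nonneg
  have hg_lt : ∀ᵐ x ∂γ, g x < 1 := by
    filter_upwards [rnDeriv_lt_one hac] with x hx
    have hne : ν.rnDeriv γ x ≠ ∞ := (hx.trans ENNReal.one_lt_top).ne
    have := (ENNReal.toReal_lt_toReal hne ENNReal.one_ne_top).mpr hx
    simpa using this
  obtain ⟨m₀, hm₀⟩ := exists_nat_ge ((γ Set.univ).toReal / ε)
  set m : ℕ := m₀ + 1 with hmdef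
  have hmpos : (0:ℝ) < m := by positivity
  have hbound : (γ Set.univ).toReal * (1 / m) ≤ ε := by
    rw [mul_one_div, div_le_iff₀ hmpos]
    have h1 : (γ Set.univ).toReal / ε ≤ m := le_trans hm₀ (by exact_mod_cast Nat.le_succ m₀)
    calc (γ Set.univ).toReal = ((γ Set.univ).toReal / ε) * ε := by field_simp
    _ ≤ (m : ℝ) * ε := mul_le_mul_of_nonneg_right h1 hε.le
    _ = ε * m := mul_comm _ _
  set Ak : ℕ → Set Ω := fun k =>
    if k = m then (g ⁻¹' (Set.Ico 0 1))ᶜ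
    else g ⁻¹' (Set.Ico ((k:ℝ)/m) (((k:ℝ)+1)/m)) with hAk
  have hAkmeas : ∀ k, MeasurableSet (Ak k) := by
    intro k
    by_cases h : k = m
    · simp only [hAk, if_pos h]
      exact (hgmeas measurableSet_Ico).compl
    · simp only [hAk, if_neg h]
      exact hgmeas measurableSet_Ico
  have hIco_sub : ∀ k, k < m → Ak k ⊆ g ⁻¹' (Set.Ico (0:ℝ) 1) := by
    intro k hk x hx
    simp only [hAk, if_neg hk.ne] at hx
    have hk1 : ((k:ℝ) + 1) / m ≤ 1 := by
      rw [div_le_one hmpos]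
      exact_mod_cast Nat.succ_le_of_lt hk
    exact ⟨le_trans (by positivity) hx.1, lt_of_lt_of_le hx.2 hk1⟩
  have hdisj : ∀ k l, k < m + 1 → l < m + 1 → k ≠ l → Disjoint (Ak k) (Ak l) := by
    have haux : ∀ k l, k < l → l < m + 1 → Disjoint (Ak k) (Ak l) := by
      intro k l hkl hl
      have hk : k < m := lt_of_lt_of_le hkl (Nat.lt_succ_iff.mp hl)
      rw [Set.disjoint_left]
      intro x hxk hxl
      by_cases hlm : l = m
      · have := hIco_sub k hk hxk
        simp only [hAk, if_pos hlm] at hxl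
        exact hxl this
      · have hxk' : g x < ((k:ℝ) + 1) / m := by
          simp only [hAk, if_neg hk.ne] at hxk; exact hxk.2
        have hxl' : ((l:ℝ)) / m ≤ g x := by
          simp only [hAk, if_neg hlm] at hxl; exact hxl.1
        have hcast : ((k:ℝ) + 1) ≤ (l:ℝ) := by exact_mod_cast Nat.succ_le_of_lt hkl
        have : ((k:ℝ) + 1) / m ≤ (l:ℝ) / m := by gcongr
        linarith
    intro k l hk hl hkl
    rcases lt_or_gt_of_ne hkl with h | h
    · exact haux k l h hl
    · exact (haux l k h hk).symm
  have hcover : ∀ x, ∃ k, k < m + 1 ∧ x ∈ Ak k := by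
    intro x
    by_cases hx : g x ∈ Set.Ico (0:ℝ) 1
    · set k : ℕ := ⌊g x * m⌋₊ with hkdef
      have hprod0 : 0 ≤ g x * m := mul_nonneg (hg0 x) hmpos.le
      have hklt : k < m := by
        rw [hkdef, Nat.floor_lt hprod0]
        calc g x * m < 1 * m := by
              exact mul_lt_mul_of_pos_right hx.2 hmpos
        _ = (m:ℝ) := one_mul _
      refine ⟨k, lt_trans hklt (Nat.lt_succ_self m), ?_⟩
      simp only [hAk, if_neg hklt.ne]
      constructor
      · rw [div_le_iff₀ hmpos]
        exact Nat.floor_le hprod0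
      · rw [lt_div_iff₀ hmpos]
        exact_mod_cast Nat.lt_floor_add_one (g x * m)
    · refine ⟨m, Nat.lt_succ_self m, ?_⟩
      simp only [hAk, if_pos rfl]
      exact hx
  set p : Finset (Set Ω) := (Finset.range (m + 1)).image Ak with hpdef
  have hp : IsFinitePartition p := by
    refine ⟨?_, ?_, ?_⟩
    · intro A hA
      obtain ⟨k, _, rfl⟩ := Finset.mem_image.mp hA
      exact hAkmeas k
    · intro B hB C hC hBC
      obtain ⟨k, hk, rfl⟩ := Finset.mem_image.mp (Finset.mem_coe.mp hB)
      obtain ⟨l, hl, rfl⟩ := Finset.mem_image.mp (Finset.mem_coe.mp hC)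
      have hkl : k ≠ l := fun h => hBC (by rw [h])
      exact hdisj k l (Finset.mem_range.mp hk) (Finset.mem_range.mp hl) hkl
    · rw [Set.eq_univ_iff_forall]
      intro x
      obtain ⟨k, hk, hxk⟩ := hcover x
      exact Set.mem_sUnion.mpr ⟨Ak k, Finset.mem_coe.mpr
        (Finset.mem_image.mpr ⟨k, Finset.mem_range.mpr hk, rfl⟩), hxk⟩
  have hAm0 : γ (Ak m) = 0 := by
    have : ∀ᵐ x ∂γ, x ∉ Ak m := by
      filter_upwards [hg_lt] with x hx
      simp only [hAk, if_pos rfl, Set.mem_compl_iff, not_not]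
      exact ⟨hg0 x, hx⟩
    exact measure_eq_zero_iff_ae_notMem.mpr this
  have hclose : ∀ᵐ x ∂γ, |partFn ν γ p x - g x| ≤ 1 / m := by
    have hnull : ∀ᵐ x ∂γ, ∀ A ∈ (p : Set (Set Ω)), γ A = 0 → x ∉ A := by
      rw [ae_ball_iff p.countable_toSet]
      intro A hA
      by_cases h : γ A = 0
      · filter_upwards [measure_eq_zero_iff_ae_notMem.mp h] with x hx
        exact fun _ => hx
      · exact ae_of_all _ fun x h' => absurd h' h
    filter_upwards [hnull] with x hx
    obtain ⟨A, hA, hxA⟩ := hp.exists_mem x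
    have hγA : γ A ≠ 0 := fun h => hx A (Finset.mem_coe.mpr hA) h hxA
    obtain ⟨k, hk', hAkk⟩ := Finset.mem_image.mp hA
    have hk : k < m + 1 := Finset.mem_range.mp hk'
    have hkm : k ≠ m := by
      rintro rfl
      exact hγA (hAkk ▸ hAm0)
    have hklt : k < m := lt_of_le_of_ne (Nat.lt_succ_iff.mp hk) hkm
    have hAeq : A = g ⁻¹' (Set.Ico ((k:ℝ)/m) (((k:ℝ)+1)/m)) := by
      rw [← hAkk]
      simp only [hAk, if_neg hkm]
    have hmemx : (k:ℝ)/m ≤ g x ∧ g x < ((k:ℝ)+1)/m := by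
      have h' := hxA
      rw [hAeq] at h'
      exact h'
    have hγA' : (0:ℝ) < (γ A).toReal := ENNReal.toReal_pos hγA (measure_ne_top γ A)
    have hint : ∫ y in A, g y ∂γ = (ν A).toReal :=
      Measure.setIntegral_toReal_rnDeriv nu_ac_gamma A
    have hAmeas : MeasurableSet A := hp.1 A hA
    have hglo : (γ A).toReal * ((k:ℝ)/m) ≤ ∫ y in A, g y ∂γ := by
      have h' : ∫ _ in A, ((k:ℝ)/m) ∂γ ≤ ∫ y in A, g y ∂γ :=
        setIntegral_mono_on (integrableOn_const (measure_ne_top γ A))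
          (Measure.integrable_toReal_rnDeriv.integrableOn) hAmeas
          (fun y hy => by rw [hAeq] at hy; exact hy.1)
      rwa [setIntegral_const, smul_eq_mul, measureReal_def] at h'
    have hghi : ∫ y in A, g y ∂γ ≤ (γ A).toReal * (((k:ℝ)+1)/m) := by
      have h' : ∫ y in A, g y ∂γ ≤ ∫ _ in A, (((k:ℝ)+1)/m) ∂γ :=
        setIntegral_mono_on (Measure.integrable_toReal_rnDeriv.integrableOn)
          (integrableOn_const (measure_ne_top γ A)) hAmeas
          (fun y hy => by rw [hAeq] at hy; exact (le_of_lt hy.2))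
      rwa [setIntegral_const, smul_eq_mul, measureReal_def] at h'
    rw [partFn_eq_of_mem hp hA hxA, if_pos hγA]
    have hc1 : (k:ℝ)/m ≤ (ν A).toReal / (γ A).toReal := by
      rw [le_div_iff₀ hγA']
      calc (k:ℝ)/m * (γ A).toReal = (γ A).toReal * ((k:ℝ)/m) := mul_comm _ _
      _ ≤ ∫ y in A, g y ∂γ := hglo
      _ = (ν A).toReal := hint
    have hc2 : (ν A).toReal / (γ A).toReal ≤ ((k:ℝ)+1)/m := by
      rw [div_le_iff₀ hγA']
      calc (ν A).toReal = ∫ y in A, g y ∂γ := hint.symm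
      _ ≤ (γ A).toReal * (((k:ℝ)+1)/m) := hghi
      _ = ((k:ℝ)+1)/m * (γ A).toReal := mul_comm _ _
    have hdd : ((k:ℝ)+1)/m = (k:ℝ)/m + 1/m := by ring
    rw [abs_le]
    constructor
    · linarith [hmemx.2]
    · linarith [hmemx.1]
  refine ⟨p, hp, ?_⟩
  have hexpg : Integrable (fun x => Real.exp (-(g x))) γ := exp_neg_g_integrable
  have hmono : ∫ x, (Real.exp (-(g x)) - 1/m) ∂γ
      ≤ ∫ x, Real.exp (-(partFn ν γ p x)) ∂γ := by
    refine integral_mono_ae (hexpg.sub (integrable_const _))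
      (exp_neg_partFn_integrable hp γ) ?_
    filter_upwards [hclose] with x hx
    have hlip := exp_neg_lip (partFn_nonneg (ν := ν) (lam := γ) (π := p) x) (hg0 x)
    linarith
  rw [integral_sub hexpg (integrable_const _), integral_const, smul_eq_mul, measureReal_def] at hmono
  have : (γ Set.univ).toReal * (1/m) ≤ ε := hbound
  linarith

lemma toReal_rnDeriv_lt_one (hac : ν ≪ μ) :
    ∀ᵐ x ∂(μ + ν), (ν.rnDeriv (μ + ν) x).toReal < 1 := by
  filter_upwards [rnDeriv_lt_one hac] with x hx
  have hne : ν.rnDeriv (μ + ν) x ≠ ∞ := (hx.trans ENNReal.one_lt_top).ne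
  have := (ENNReal.toReal_lt_toReal hne ENNReal.one_ne_top).mpr hx
  simpa using this

/-- total integral of partFn w.r.t. its own base measure. -/
lemma integral_partFn_total (hπ : IsFinitePartition π) (hac : ν ≪ μ) :
    ∫ x, partFn ν μ π x ∂μ = (ν Set.univ).toReal := by
  rw [integral_partition hπ (integrable_partFn hπ μ)]
  calc ∑ A ∈ π, ∫ x in A, partFn ν μ π x ∂μ
      = ∑ A ∈ π, (ν A).toReal := Finset.sum_congr rfl fun A hA =>
        setIntegral_partFn hπ (fun B hB => hac hB) hA
    _ = (∑ A ∈ π, ν A).toReal := (ENNReal.toReal_sum fun A _ => measure_ne_top ν A).symm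
    _ = (ν Set.univ).toReal := by
        congr 1
        have hx : ν (⋃ A ∈ π, A) = ∑ A ∈ π, ν A := measure_biUnion_finset hπ.2.1 hπ.1
        rw [← hx]
        congr 1
        have h := hπ.2.2
        rw [Set.sUnion_eq_biUnion] at h
        simpa using h

end MT

section Limits

variable {Ω : Type*} [MeasurableSpace Ω]

/-- Scheffé-type lemma. -/
lemma scheffe (κ : Measure Ω) [IsFiniteMeasure κ] {F : ℕ → Ω → ℝ} {R : Ω → ℝ}
    (hF_int : ∀ n, Integrable (F n) κ) (hR_int : Integrable R κ)
    (hF0 : ∀ n x, 0 ≤ F n x) (hR0 : ∀ᵐ x ∂κ, 0 ≤ R x)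
    (hFi : ∀ n, ∫ x, F n x ∂κ = ∫ x, R x ∂κ)
    (hconv : ∀ᵐ x ∂κ, Tendsto (fun n => F n x) atTop (𝓝 (R x))) :
    Tendsto (fun n => ∫ x, |F n x - R x| ∂κ) atTop (𝓝 0) := by
  have hmin_int : ∀ n, Integrable (fun x => min (F n x) (R x)) κ := by
    intro n
    have h := (hF_int n).inf hR_int
    exact h
  have hminconv : Tendsto (fun n => ∫ x, min (F n x) (R x) ∂κ) atTop (𝓝 (∫ x, R x ∂κ)) := by
    refine tendsto_integral_of_dominated_convergence (fun x => |R x|)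
      (fun n => (hmin_int n).aestronglyMeasurable) hR_int.abs ?_ ?_
    · intro n
      filter_upwards [hR0] with x hx
      rw [Real.norm_eq_abs, abs_le]
      constructor
      · have : -|R x| ≤ 0 := neg_nonpos.mpr (abs_nonneg _)
        have h2 : (0:ℝ) ≤ min (F n x) (R x) := le_min (hF0 n x) hx
        linarith
      · exact le_trans (min_le_right _ _) (le_abs_self _)
    · filter_upwards [hconv] with x hx
      have := hx.min (tendsto_const_nhds : Tendsto (fun _ : ℕ => R x) atTop (𝓝 (R x)))
      simpa using this
  have key : ∀ n, ∫ x, |F n x - R x| ∂κ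
      = (∫ x, F n x ∂κ) + (∫ x, R x ∂κ) - 2 * ∫ x, min (F n x) (R x) ∂κ := by
    intro n
    have hpt : ∀ x, |F n x - R x| = F n x + R x - 2 * min (F n x) (R x) := by
      intro x
      rcases le_total (F n x) (R x) with h | h
      · rw [abs_of_nonpos (by linarith), min_eq_left h]; ring
      · rw [abs_of_nonneg (by linarith), min_eq_right h]; ring
    rw [show (fun x => |F n x - R x|) = fun x => F n x + R x - 2 * min (F n x) (R x) from
      funext hpt]
    have e1 := integral_sub ((hF_int n).add hR_int) ((hmin_int n).const_mul 2)
    have e2 := integral_add (hF_int n) hR_int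
    simp only [Pi.sub_apply, Pi.add_apply] at e1 e2
    rw [e1, e2, integral_const_mul]
  have h2 : Tendsto (fun n => (∫ x, F n x ∂κ) + (∫ x, R x ∂κ)
      - 2 * ∫ x, min (F n x) (R x) ∂κ) atTop (𝓝 0) := by
    have hconst : ∀ n, (∫ x, F n x ∂κ) + (∫ x, R x ∂κ) = 2 * ∫ x, R x ∂κ := by
      intro n; rw [hFi n]; ring
    simp_rw [hconst]
    have := (tendsto_const_nhds (x := 2 * ∫ x, R x ∂κ) (f := atTop (α := ℕ))).sub
      (hminconv.const_mul 2)
    simpa using this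
  simpa [key] using h2

/-- convergence in measure from L² convergence. -/
lemma tendstoInMeasure_of_sq (κ : Measure Ω) [IsFiniteMeasure κ] {F : ℕ → Ω → ℝ} {G : Ω → ℝ}
    (hint : ∀ n, Integrable (fun x => (G x - F n x) ^ 2) κ)
    (hQ : Tendsto (fun n => ∫ x, (G x - F n x) ^ 2 ∂κ) atTop (𝓝 0)) :
    TendstoInMeasure κ F atTop G := by
  rw [tendstoInMeasure_iff_dist]
  intro ε hε
  have hQ0 : ∀ n, 0 ≤ ∫ x, (G x - F n x) ^ 2 ∂κ := fun n => integral_nonneg fun x => sq_nonneg _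
  have hle : ∀ n, κ {x | ε ≤ dist (F n x) (G x)}
      ≤ ENNReal.ofReal ((∫ x, (G x - F n x) ^ 2 ∂κ) / ε ^ 2) := by
    intro n
    have hsub : {x | ε ≤ dist (F n x) (G x)} ⊆ {x | ε ^ 2 ≤ (G x - F n x) ^ 2} := by
      intro x hx
      simp only [Set.mem_setOf_eq] at hx ⊢
      have h1 : dist (F n x) (G x) = |F n x - G x| := Real.dist_eq _ _
      have h2 : (F n x - G x) ^ 2 = (G x - F n x) ^ 2 := by ring
      calc ε ^ 2 ≤ |F n x - G x| ^ 2 := by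
            rw [h1] at hx
            exact pow_le_pow_left₀ hε.le hx 2
      _ = (G x - F n x) ^ 2 := by rw [sq_abs, h2]
    have hmarkov := mul_meas_ge_le_integral_of_nonneg
      (ae_of_all κ fun x => sq_nonneg (G x - F n x)) (hint n) (ε ^ 2)
    have h3 : (κ {x | ε ≤ dist (F n x) (G x)}).toReal
        ≤ (κ {x | ε ^ 2 ≤ (G x - F n x) ^ 2}).toReal :=
      ENNReal.toReal_mono (measure_ne_top _ _) (measure_mono hsub)
    have hmeas_le : (κ {x | ε ≤ dist (F n x) (G x)}).toReal
        ≤ (∫ x, (G x - F n x) ^ 2 ∂κ) / ε ^ 2 := by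
      rw [le_div_iff₀ (by positivity : (0:ℝ) < ε ^ 2)]
      calc (κ {x | ε ≤ dist (F n x) (G x)}).toReal * ε ^ 2
          ≤ (κ {x | ε ^ 2 ≤ (G x - F n x) ^ 2}).toReal * ε ^ 2 :=
            mul_le_mul_of_nonneg_right h3 (sq_nonneg ε)
      _ = ε ^ 2 * (κ {x | ε ^ 2 ≤ (G x - F n x) ^ 2}).toReal := mul_comm _ _
      _ ≤ ∫ x, (G x - F n x) ^ 2 ∂κ := hmarkov
    calc κ {x | ε ≤ dist (F n x) (G x)}
        = ENNReal.ofReal ((κ {x | ε ≤ dist (F n x) (G x)}).toReal) :=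
          (ENNReal.ofReal_toReal (measure_ne_top _ _)).symm
    _ ≤ ENNReal.ofReal ((∫ x, (G x - F n x) ^ 2 ∂κ) / ε ^ 2) :=
          ENNReal.ofReal_le_ofReal hmeas_le
  have hup : Tendsto (fun n => ENNReal.ofReal ((∫ x, (G x - F n x) ^ 2 ∂κ) / ε ^ 2))
      atTop (𝓝 0) := by
    have h1 : Tendsto (fun n => (∫ x, (G x - F n x) ^ 2 ∂κ) / ε ^ 2) atTop (𝓝 0) := by
      simpa using hQ.div_const (ε ^ 2)
    have := ENNReal.tendsto_ofReal h1
    simpa using this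
  exact tendsto_of_tendsto_of_tendsto_of_le_of_le tendsto_const_nhds hup
    (fun n => zero_le) hle

end Limits

/-- Let `μ, ν` be finite measures on `(Ω, F)` with `ν ≪ μ`, and `γ := μ + ν`. If `(π_n)_n` is an
increasing (refining) sequence of finite measurable partitions of `Ω` that asymptotically
maximizes `π ↦ ∫ e^{-f_π(γ)} dγ` over all finite measurable partitions, then
`f_{π_n}(μ) → dν/dμ` in `L¹(μ)`. -/
theorem stmt5 {Ω : Type*} [MeasurableSpace Ω] (μ ν : Measure Ω)
    [IsFiniteMeasure μ] [IsFiniteMeasure ν] (hac : ν ≪ μ)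
    (π : ℕ → Finset (Set Ω)) (hπ : ∀ n, IsFinitePartition (π n))
    (hmono : ∀ n, Refines (π (n + 1)) (π n))
    (hmax : (⨆ n, ∫ x, Real.exp (-(partFn ν (μ + ν) (π n) x)) ∂(μ + ν)) =
      ⨆ p : {p : Finset (Set Ω) // IsFinitePartition p},
        ∫ x, Real.exp (-(partFn ν (μ + ν) p.1 x)) ∂(μ + ν)) :
    Tendsto (fun n => ∫ x, |partFn ν μ (π n) x - (ν.rnDeriv μ x).toReal| ∂μ)
      atTop (𝓝 0) := by
  have hnonempty : Nonempty {p : Finset (Set Ω) // IsFinitePartition p} := by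
    refine ⟨⟨{Set.univ}, ?_, ?_, ?_⟩⟩
    · intro A hA
      rw [Finset.mem_singleton] at hA
      subst hA
      exact MeasurableSet.univ
    · simp
    · simp
  set M : ℝ := ∫ x, Real.exp (-(ν.rnDeriv (μ + ν) x).toReal) ∂(μ + ν) with hMdef
  have hIle : ∀ n, ∫ x, Real.exp (-(partFn ν (μ + ν) (π n) x)) ∂(μ + ν) ≤ M :=
    fun n => integral_exp_le (hπ n)
  have hImono : Monotone (fun n => ∫ x, Real.exp (-(partFn ν (μ + ν) (π n) x)) ∂(μ + ν)) :=
    monotone_nat_of_le_succ fun n =>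
      integral_exp_mono_refines (hπ n) (hπ (n + 1)) (hmono n)
  have hbddn : BddAbove (Set.range fun n =>
      ∫ x, Real.exp (-(partFn ν (μ + ν) (π n) x)) ∂(μ + ν)) := by
    refine ⟨M, ?_⟩
    rintro y ⟨n, rfl⟩
    exact hIle n
  have hbddP : BddAbove (Set.range fun p : {p : Finset (Set Ω) // IsFinitePartition p} =>
      ∫ x, Real.exp (-(partFn ν (μ + ν) p.1 x)) ∂(μ + ν)) := by
    refine ⟨M, ?_⟩
    rintro y ⟨p, rfl⟩
    exact integral_exp_le p.2
  have hPsup : (⨆ p : {p : Finset (Set Ω) // IsFinitePartition p},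
      ∫ x, Real.exp (-(partFn ν (μ + ν) p.1 x)) ∂(μ + ν)) = M := by
    apply le_antisymm
    · exact ciSup_le fun p => integral_exp_le p.2
    · by_contra h
      push_neg at h
      obtain ⟨p, hp, hcl⟩ := exists_partition_close (μ := μ) hac
        (half_pos (sub_pos.mpr h))
      have hle := le_ciSup hbddP ⟨p, hp⟩
      simp only at hle hcl
      set S := ⨆ p : {p : Finset (Set Ω) // IsFinitePartition p},
        ∫ x, Real.exp (-(partFn ν (μ + ν) p.1 x)) ∂(μ + ν)
      linarith
  have hItend : Tendsto (fun n => ∫ x, Real.exp (-(partFn ν (μ + ν) (π n) x)) ∂(μ + ν))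
      atTop (𝓝 M) := by
    have h := tendsto_atTop_ciSup hImono hbddn
    rwa [hmax, hPsup] at h
  -- quadratic error tends to zero
  have hQ0 : ∀ n, 0 ≤ ∫ x, ((ν.rnDeriv (μ + ν) x).toReal - partFn ν (μ + ν) (π n) x) ^ 2
      ∂(μ + ν) := fun n => integral_nonneg fun x => sq_nonneg _
  have hQle : ∀ n, ∫ x, ((ν.rnDeriv (μ + ν) x).toReal - partFn ν (μ + ν) (π n) x) ^ 2 ∂(μ + ν)
      ≤ (M - ∫ x, Real.exp (-(partFn ν (μ + ν) (π n) x)) ∂(μ + ν)) / (Real.exp (-2) / 2) := by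
    intro n
    have hk := key_integral_ineq (μ := μ) (ν := ν) (hπ n)
    rw [le_div_iff₀ (by positivity : (0:ℝ) < Real.exp (-2) / 2)]
    rw [← hMdef] at hk
    nlinarith
  have hQtend : Tendsto (fun n =>
      ∫ x, ((ν.rnDeriv (μ + ν) x).toReal - partFn ν (μ + ν) (π n) x) ^ 2 ∂(μ + ν))
      atTop (𝓝 0) := by
    refine squeeze_zero hQ0 hQle ?_
    have h := ((tendsto_const_nhds : Tendsto (fun _ : ℕ => M) atTop (𝓝 M)).sub
      hItend).div_const (Real.exp (-2) / 2)
    simpa using h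
  refine tendsto_of_subseq_tendsto fun ns hns => ?_
  have hQns : Tendsto (fun k =>
      ∫ x, ((ν.rnDeriv (μ + ν) x).toReal - partFn ν (μ + ν) (π (ns k)) x) ^ 2 ∂(μ + ν))
      atTop (𝓝 0) := hQtend.comp hns
  have hTIM : TendstoInMeasure (μ + ν) (fun k => partFn ν (μ + ν) (π (ns k))) atTop
      (fun x => (ν.rnDeriv (μ + ν) x).toReal) :=
    tendstoInMeasure_of_sq (μ + ν) (fun k => sq_sub_integrable (hπ (ns k))) hQns
  obtain ⟨ms, _, hae⟩ := hTIM.exists_seq_tendsto_ae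
  refine ⟨ms, ?_⟩
  have haeμ : ∀ᵐ x ∂μ, Tendsto (fun k => partFn ν (μ + ν) (π (ns (ms k))) x) atTop
      (𝓝 ((ν.rnDeriv (μ + ν) x).toReal)) := (mu_ac_gamma (μ := μ) (ν := ν)).ae_le hae
  have hglt : ∀ᵐ x ∂μ, (ν.rnDeriv (μ + ν) x).toReal < 1 :=
    (mu_ac_gamma (μ := μ) (ν := ν)).ae_le (toReal_rnDeriv_lt_one hac)
  have hR := rnDeriv_mu_eq hac
  have hconv : ∀ᵐ x ∂μ, Tendsto (fun k => partFn ν μ (π (ns (ms k))) x) atTop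
      (𝓝 ((ν.rnDeriv μ x).toReal)) := by
    filter_upwards [haeμ, hglt, hR] with x hx hlt hRx
    have hrw : (fun k => partFn ν μ (π (ns (ms k))) x)
        = fun k => partFn ν (μ + ν) (π (ns (ms k))) x
            / (1 - partFn ν (μ + ν) (π (ns (ms k))) x) :=
      funext fun k => partFn_mu_eq hac (hπ (ns (ms k))) x
    rw [hrw, hRx]
    exact hx.div (tendsto_const_nhds.sub hx) (by linarith)
  exact scheffe μ (fun k => integrable_partFn (hπ (ns (ms k))) μ)
    Measure.integrable_toReal_rnDeriv
    (fun k x => partFn_nonneg x)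
    (ae_of_all _ fun x => ENNReal.toReal_nonneg)
    (fun k => by rw [integral_partFn_total (hπ (ns (ms k))) hac,
      Measure.integral_toReal_rnDeriv hac, measureReal_def])
    hconv
end

section
/- Let μ be a finite positive measure on (Ω, F) and let (f_n)_{n∈ℕ} be a sequence bounded in L²(μ). Then there exists a sequence (g_n)_{n∈ℕ} with g_n a (finite) convex combination of {f_k : k ≥ n} for every n, such that (g_n) converges both μ-a.e. and in L²(μ). -/
open MeasureTheory Filter
open scoped ENNReal Topology

theorem aux_cauchy_of_nested {E : Type*} [NormedAddCommGroup E] [InnerProductSpace ℝ E]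
    (P : ℕ → Set E)
    (hmono : ∀ {m n : ℕ}, m ≤ n → P n ⊆ P m)
    (hmid : ∀ n, ∀ x ∈ P n, ∀ y ∈ P n, (2⁻¹ : ℝ) • (x + y) ∈ P n)
    (C : ℝ) (hC : ∀ n, ∃ x ∈ P n, ‖x‖ ≤ C) :
    ∃ x : ℕ → E, (∀ n, x n ∈ P n) ∧ CauchySeq x := by
  have hPne : ∀ n, ((fun y : E => ‖y‖) '' P n).Nonempty := by
    intro n; obtain ⟨x, hx, -⟩ := hC n; exact ⟨‖x‖, x, hx, rfl⟩
  have hPbdd : ∀ n, BddBelow ((fun y : E => ‖y‖) '' P n) := by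
    intro n; exact ⟨0, fun r ⟨y, _, hy⟩ => hy ▸ norm_nonneg y⟩
  set d : ℕ → ℝ := fun n => sInf ((fun y : E => ‖y‖) '' P n) with hd
  have hd_nonneg : ∀ n, 0 ≤ d n := by
    intro n; exact le_csInf (hPne n) fun r ⟨y, _, hy⟩ => hy ▸ norm_nonneg y
  have hd_mono : Monotone d := by
    intro m n hmn
    exact csInf_le_csInf (hPbdd m) (hPne n) (Set.image_mono (hmono hmn))
  have hd_leC : ∀ n, d n ≤ C := by
    intro n
    obtain ⟨x, hx, hxC⟩ := hC n
    exact le_trans (csInf_le (hPbdd n) ⟨x, hx, rfl⟩) hxC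
  have hbddA : BddAbove (Set.range d) := ⟨C, by rintro r ⟨n, rfl⟩; exact hd_leC n⟩
  set D : ℝ := ⨆ n, d n with hD
  have hdD : ∀ n, d n ≤ D := fun n => le_ciSup hbddA n
  have hD_nonneg : 0 ≤ D := le_trans (hd_nonneg 0) (hdD 0)
  have htendD : Tendsto d atTop (𝓝 D) := tendsto_atTop_ciSup hd_mono hbddA
  set u : ℕ → ℝ := fun n => 1 / (n + 1 : ℝ) with hu
  have hu_pos : ∀ n, 0 < u n := fun n => by positivity
  have hu_anti : Antitone u := by
    intro m n hmn
    apply one_div_le_one_div_of_le (by positivity)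
    exact_mod_cast add_le_add_left (Nat.cast_le.mpr hmn) 1
  have hu_tend : Tendsto u atTop (𝓝 0) := tendsto_one_div_add_atTop_nhds_zero_nat
  -- choose points
  have hchoice : ∀ n, ∃ x ∈ P n, ‖x‖ < d n + u n := by
    intro n
    obtain ⟨r, ⟨x, hx, rfl⟩, hr⟩ := Real.lt_sInf_add_pos (hPne n) (hu_pos n)
    exact ⟨x, hx, hr⟩
  choose x hxP hxn using hchoice
  refine ⟨x, hxP, ?_⟩
  set t : ℕ → ℝ := fun n => 2 * (D + u n) ^ 2 - 2 * (d n) ^ 2 with ht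
  have hxle : ∀ n, ‖x n‖ ≤ D + u n := fun n =>
    le_trans (hxn n).le (add_le_add_left (hdD n) _)
  have ht_anti : Antitone t := by
    intro m n hmn
    have h1 : (D + u n) ^ 2 ≤ (D + u m) ^ 2 := by
      apply pow_le_pow_left₀ (by positivity) (add_le_add_right (hu_anti hmn) D)
    have h2 : (d m) ^ 2 ≤ (d n) ^ 2 :=
      pow_le_pow_left₀ (hd_nonneg m) (hd_mono hmn) 2
    simp only [ht]; nlinarith
  have hkey : ∀ m n, m ≤ n → ‖x m - x n‖ ^ 2 ≤ 2 * t m := by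
    intro m n hmn
    have hmidP : (2⁻¹ : ℝ) • (x m + x n) ∈ P m :=
      hmid m (x m) (hxP m) (x n) (hmono hmn (hxP n))
    have hdm : d m ≤ ‖(2⁻¹ : ℝ) • (x m + x n)‖ := csInf_le (hPbdd m) ⟨_, hmidP, rfl⟩
    have hnadd : ‖(2⁻¹ : ℝ) • (x m + x n)‖ = 2⁻¹ * ‖x m + x n‖ := by
      rw [norm_smul]; norm_num
    have hpar := parallelogram_law_with_norm ℝ (x m) (x n)
    have h1 : ‖x m‖ ≤ D + u m := hxle m
    have h2 : ‖x n‖ ≤ D + u m := le_trans (hxle n) (add_le_add_right (hu_anti hmn) D)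
    have h3 : 2 * d m ≤ ‖x m + x n‖ := by rw [hnadd] at hdm; linarith
    have h4 : 0 ≤ d m := hd_nonneg m
    have h5 : (0:ℝ) ≤ ‖x m‖ := norm_nonneg _
    have h6 : (0:ℝ) ≤ ‖x n‖ := norm_nonneg _
    simp only [ht]
    nlinarith [norm_nonneg (x m + x n), norm_nonneg (x m - x n)]
  have ht_nonneg : ∀ n, 0 ≤ t n := by
    intro n
    have := hkey n n le_rfl
    nlinarith [sq_nonneg ‖x n - x n‖]
  have ht_tend : Tendsto t atTop (𝓝 0) := by
    have : Tendsto t atTop (𝓝 (2 * (D + 0) ^ 2 - 2 * D ^ 2)) := by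
      exact (((tendsto_const_nhds.add hu_tend).pow 2).const_mul 2).sub
        ((htendD.pow 2).const_mul 2)
    simpa using this
  apply cauchySeq_of_le_tendsto_0 (fun N => Real.sqrt (2 * t N)) ?_ ?_
  · intro m n N hm hn
    rw [dist_eq_norm]
    have hb : ‖x m - x n‖ ^ 2 ≤ 2 * t N := by
      rcases le_total m n with h | h
      · exact le_trans (hkey m n h) (by nlinarith [ht_anti hm])
      · rw [norm_sub_rev]
        exact le_trans (hkey n m h) (by nlinarith [ht_anti hn])
    have := Real.sqrt_le_sqrt hb
    rwa [Real.sqrt_sq (norm_nonneg _)] at this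
  · have : Tendsto (fun N => Real.sqrt (2 * t N)) atTop (𝓝 (Real.sqrt (2 * 0))) :=
      (ht_tend.const_mul 2).sqrt
    simpa using this

/-- **Convergent forward convex combinations of an `L²`-bounded sequence.** If `μ` is a finite
measure and `(f_n)_n` is bounded in `L²(μ)`, then there is a forward convex combination
`(g_n)_n` of `(f_n)_n` (i.e. each `g_n` is a finite convex combination of `{f_k : k ≥ n}`)
converging both `μ`-a.e. and in `L²(μ)`. -/
theorem stmt9 {Ω : Type*} [MeasurableSpace Ω] (μ : Measure Ω) [IsFiniteMeasure μ]
    (f : ℕ → Ω → ℝ) (hf : ∀ n, MemLp (f n) 2 μ)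
    (hbdd : ∃ C : ℝ≥0∞, C ≠ ∞ ∧ ∀ n, eLpNorm (f n) 2 μ ≤ C) :
    ∃ g : ℕ → Ω → ℝ,
      (∀ n, ∃ (s : Finset ℕ) (a : ℕ → ℝ), (∀ k ∈ s, n ≤ k) ∧ (∀ k ∈ s, 0 ≤ a k) ∧
        (∑ k ∈ s, a k) = 1 ∧ g n = fun x => ∑ k ∈ s, a k * f k x) ∧
      ∃ h : Ω → ℝ, MemLp h 2 μ ∧
        (∀ᵐ x ∂μ, Tendsto (fun n => g n x) atTop (𝓝 (h x))) ∧
        Tendsto (fun n => eLpNorm (fun x => g n x - h x) 2 μ) atTop (𝓝 0) := by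
  obtain ⟨C, hC_ne, hCb⟩ := hbdd
  set F : ℕ → Lp ℝ 2 μ := fun n => (hf n).toLp (f n) with hFdef
  -- the coeFn of a combination
  have hcoe : ∀ (s : Finset ℕ) (c : ℕ → ℝ),
      ⇑(∑ k ∈ s, c k • F k) =ᵐ[μ] fun ω => ∑ k ∈ s, c k * f k ω := by
    intro s c
    classical
    induction s using Finset.induction_on with
    | empty => simp only [Finset.sum_empty]; exact Lp.coeFn_zero ℝ 2 μ
    | @insert i s his ih =>
      have h1 := Lp.coeFn_add (c i • F i) (∑ k ∈ s, c k • F k)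
      have h2 := Lp.coeFn_smul (c i) (F i)
      have h3 := (hf i).coeFn_toLp
      filter_upwards [h1, h2, h3, ih] with ω e1 e2 e3 e4
      rw [Finset.sum_insert his, Finset.sum_insert his, e1, Pi.add_apply, e2,
        Pi.smul_apply, e4, smul_eq_mul, e3]
  set P : ℕ → Set (Lp ℝ 2 μ) := fun n => {x | ∃ (s : Finset ℕ) (a : ℕ → ℝ),
    (∀ k ∈ s, n ≤ k) ∧ (∀ k ∈ s, 0 ≤ a k) ∧ (∑ k ∈ s, a k) = 1 ∧
    x = ∑ k ∈ s, a k • F k} with hPdef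
  have hmono : ∀ {m n : ℕ}, m ≤ n → P n ⊆ P m := by
    intro m n hmn x ⟨s, a, hs, ha, hsum, hx⟩
    exact ⟨s, a, fun k hk => le_trans hmn (hs k hk), ha, hsum, hx⟩
  have hmid : ∀ n, ∀ x ∈ P n, ∀ y ∈ P n, (2⁻¹ : ℝ) • (x + y) ∈ P n := by
    classical
    rintro n x ⟨s, a, hs, ha, hsa, rfl⟩ y ⟨t, b, ht, hb, hsb, rfl⟩
    refine ⟨s ∪ t, fun k => (if k ∈ s then a k else 0) / 2 + (if k ∈ t then b k else 0) / 2,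
      ?_, ?_, ?_, ?_⟩
    · intro k hk
      rcases Finset.mem_union.mp hk with h | h
      exacts [hs k h, ht k h]
    · intro k _
      have h1 : (0:ℝ) ≤ if k ∈ s then a k else 0 := by
        by_cases hks : k ∈ s <;> simp [hks, ha k]
      have h2 : (0:ℝ) ≤ if k ∈ t then b k else 0 := by
        by_cases hkt : k ∈ t <;> simp [hkt, hb k]
      dsimp only
      positivity
    · dsimp only
      rw [Finset.sum_add_distrib]
      rw [← Finset.sum_div, ← Finset.sum_div, Finset.sum_ite_mem, Finset.sum_ite_mem,
        Finset.union_inter_cancel_left, Finset.union_inter_cancel_right, hsa, hsb]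
      norm_num
    · dsimp only
      have e1 : ∀ (c : ℕ → ℝ) (w : Finset ℕ),
          (∑ k ∈ s ∪ t, ((if k ∈ w then c k else 0) / 2) • F k)
            = (2⁻¹ : ℝ) • ∑ k ∈ (s ∪ t) ∩ w, c k • F k := by
        intro c w
        rw [Finset.smul_sum, ← Finset.sum_ite_mem]
        refine Finset.sum_congr rfl fun k _ => ?_
        by_cases hk : k ∈ w <;> simp [hk, div_eq_inv_mul, mul_smul]
      simp only [add_smul, Finset.sum_add_distrib, e1,
        Finset.union_inter_cancel_left, Finset.union_inter_cancel_right, smul_add]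
  have hCbound : ∀ n, ∃ x ∈ P n, ‖x‖ ≤ C.toReal := by
    intro n
    refine ⟨F n, ⟨{n}, fun _ => 1, by simp, by simp, by simp, by simp⟩, ?_⟩
    rw [hFdef, Lp.norm_toLp]
    exact ENNReal.toReal_mono hC_ne (hCb n)
  obtain ⟨x, hxP, hxC⟩ := aux_cauchy_of_nested P hmono hmid C.toReal hCbound
  obtain ⟨h', hlim⟩ := cauchySeq_tendsto_of_complete hxC
  have hL2 : Tendsto (fun n => eLpNorm (⇑(x n) - ⇑h') 2 μ) atTop (𝓝 0) :=
    (Lp.tendsto_Lp_iff_tendsto_eLpNorm' x h').mp hlim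
  -- representations
  choose s a hs ha hsum hx using hxP
  set gf : ℕ → Ω → ℝ := fun n ω => ∑ k ∈ s n, a n k * f k ω with hgf
  have hgf_ae : ∀ n, gf n =ᵐ[μ] ⇑(x n) := by
    intro n
    rw [hx n]
    exact (hcoe (s n) (a n)).symm
  have hgf_mem : ∀ n, MemLp (gf n) 2 μ := by
    intro n
    exact ((Lp.memLp (x n)).ae_eq (hgf_ae n).symm)
  have hL2' : Tendsto (fun n => eLpNorm (gf n - ⇑h') 2 μ) atTop (𝓝 0) := by
    refine hL2.congr fun n => ?_
    apply eLpNorm_congr_ae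
    exact EventuallyEq.sub (hgf_ae n).symm (EventuallyEq.refl _ _)
  have hTIM : TendstoInMeasure μ gf atTop ⇑h' :=
    tendstoInMeasure_of_tendsto_eLpNorm (by norm_num)
      (fun n => (hgf_mem n).aestronglyMeasurable) (Lp.memLp h').aestronglyMeasurable hL2'
  obtain ⟨ns, hns_mono, hae⟩ := hTIM.exists_seq_tendsto_ae
  refine ⟨fun n => gf (ns n), ?_, ⇑h', Lp.memLp h', hae, ?_⟩
  · intro n
    exact ⟨s (ns n), a (ns n), fun k hk => le_trans hns_mono.le_apply (hs (ns n) k hk),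
      ha (ns n), hsum (ns n), rfl⟩
  · have := hL2'.comp hns_mono.tendsto_atTop
    exact this.congr fun n => rfl
end

section
/- Let μ be a finite positive measure on (Ω, F), let (I, ≤) be a directed partially ordered set, let (F_i)_{i∈I} be a family of sub-σ-algebras of F with F_i ⊆ F_j whenever i ≤ j, and let (M_i)_{i∈I} be a uniformly integrable family with M_i ∈ L¹(μ) F_i-measurable and E^μ[M_j | F_i] = M_i whenever i ≤ j. Then the martingale is closed: there exists M_∞ ∈ L¹(μ) such that E^μ[M_∞ | F_i] = M_i for all i ∈ I. -/
open MeasureTheory Set Filter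

/-- **Uniformly integrable martingales indexed by a directed set are closed.** Let `μ` be a
finite measure on `(Ω, F)`, `(I, ≤)` a directed partially ordered set, `(F_i)_{i ∈ I}` a
monotone family of sub-σ-algebras of `F`, and `(M_i)_{i ∈ I}` a uniformly integrable family
with each `M_i ∈ L¹(μ)` `F_i`-measurable and `E^μ[M_j | F_i] = M_i` for `i ≤ j`. Then there
exists `M_∞ ∈ L¹(μ)` with `E^μ[M_∞ | F_i] = M_i` for all `i ∈ I`. -/
theorem stmt18 {Ω : Type*} {F : MeasurableSpace Ω} (μ : Measure Ω) [IsFiniteMeasure μ]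
    {I : Type*} [PartialOrder I]
    (hdir : ∀ i j : I, ∃ k : I, i ≤ k ∧ j ≤ k)
    (ℱ : I → MeasurableSpace Ω) (hle : ∀ i, ℱ i ≤ F)
    (hmono : ∀ i j : I, i ≤ j → ℱ i ≤ ℱ j)
    (M : I → Ω → ℝ) (hint : ∀ i, Integrable (M i) μ)
    (hmeas : ∀ i, Measurable[ℱ i] (M i))
    (hmart : ∀ i j : I, i ≤ j → μ[M j | ℱ i] =ᵐ[μ] M i)
    (hui : ∀ ε > (0 : ℝ), ∃ k > (0 : ℝ), ∀ i : I,
      ∫ x in {y | k ≤ |M i y|}, |M i x| ∂μ < ε) :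
    ∃ Minf : Ω → ℝ, Integrable Minf μ ∧ ∀ i : I, μ[Minf | ℱ i] =ᵐ[μ] M i := by
  rcases isEmpty_or_nonempty I with hI | hI
  · exact ⟨0, integrable_zero _ _ _, fun i => (IsEmpty.false i).elim⟩
  have := trivial
  -- Uniform integrability in mathlib's sense
  have hUI : UniformIntegrable M 1 μ := by
    refine uniformIntegrable_of le_rfl ENNReal.one_ne_top
      (fun i => (hint i).aestronglyMeasurable) ?_
    intro ε hε
    obtain ⟨k, hk, hkε⟩ := hui ε hε
    refine ⟨⟨k, hk.le⟩, fun i => ?_⟩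
    have hMF : Measurable (M i) := (hmeas i).mono (hle i) le_rfl
    have hset : {x | (⟨k, hk.le⟩ : NNReal) ≤ ‖M i x‖₊} = {y | k ≤ |M i y|} := by
      ext x
      simp only [mem_setOf_eq]
      rw [← Real.norm_eq_abs, ← coe_nnnorm]
      exact NNReal.coe_le_coe.symm
    show eLpNorm ({x | (⟨k, hk.le⟩ : NNReal) ≤ ‖M i x‖₊}.indicator (M i)) 1 μ ≤ ENNReal.ofReal ε
    rw [hset]
    have hsm : MeasurableSet {y | k ≤ |M i y|} :=
      measurableSet_le measurable_const hMF.abs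
    calc eLpNorm ({y | k ≤ |M i y|}.indicator (M i)) 1 μ
        = ∫⁻ x, ‖{y | k ≤ |M i y|}.indicator (M i) x‖₊ ∂μ := eLpNorm_one_eq_lintegral_enorm
      _ = ∫⁻ x in {y | k ≤ |M i y|}, ‖M i x‖₊ ∂μ := by
          rw [← lintegral_indicator hsm]
          refine lintegral_congr fun x => ?_
          simp [nnnorm_indicator_eq_indicator_nnnorm, ENNReal.coe_indicator]
      _ = ENNReal.ofReal (∫ x in {y | k ≤ |M i y|}, ‖M i x‖ ∂μ) :=
          (ofReal_integral_norm_eq_lintegral_enorm ((hint i).restrict)).symm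
      _ ≤ ENNReal.ofReal ε := by
          refine ENNReal.ofReal_le_ofReal ?_
          simpa [Real.norm_eq_abs] using (hkε i).le
  -- Every monotone subsequence converges in L¹
  have hseq : ∀ φ : ℕ → I, Monotone φ → ∃ L : Ω → ℝ, Integrable L μ ∧
      Tendsto (fun n => eLpNorm (M (φ n) - L) 1 μ) atTop (nhds 0) := by
    intro φ hφ
    set 𝒢 : Filtration ℕ F :=
      ⟨fun n => ℱ (φ n), fun n m h => hmono _ _ (hφ h), fun n => hle _⟩ with h𝒢
    have hadp : StronglyAdapted 𝒢 fun n => M (φ n) := fun n => (hmeas (φ n)).stronglyMeasurable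
    have hmg : Martingale (fun n => M (φ n)) 𝒢 μ :=
      ⟨hadp, fun n m h => hmart _ _ (hφ h)⟩
    have hUI' : UniformIntegrable (fun n => M (φ n)) 1 μ := by
      obtain ⟨h1, h2, C, hC⟩ := hUI
      refine ⟨fun n => h1 _, fun ε hε => ?_, C, fun n => hC _⟩
      obtain ⟨δ, hδ, h⟩ := h2 hε
      exact ⟨δ, hδ, fun n s hs hμs => h (φ n) s hs hμs⟩
    obtain ⟨R, hR⟩ := hUI'.2.2
    refine ⟨𝒢.limitProcess (fun n => M (φ n)) μ, ?_, ?_⟩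
    · exact (Filtration.memLp_limitProcess_of_eLpNorm_bdd hUI'.1 hR).integrable le_rfl
    · exact hmg.submartingale.tendsto_eLpNorm_one_limitProcess hUI'
  -- The net (M i) is Cauchy in L¹
  have hcauchy : ∀ ε : ENNReal, 0 < ε → ∃ i : I, ∀ j, i ≤ j →
      eLpNorm (M j - M i) 1 μ ≤ ε := by
    by_contra hcon
    push_neg at hcon
    obtain ⟨ε, hε, hbad⟩ := hcon
    choose g hg1 hg2 using hbad
    set φ : ℕ → I := fun n => g^[n] (Classical.arbitrary I) with hφdef
    have hφsucc : ∀ n, φ (n + 1) = g (φ n) := fun n => Function.iterate_succ_apply' g n _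
    have hφmono : Monotone φ := monotone_nat_of_le_succ fun n => by
      rw [hφsucc]; exact hg1 _
    obtain ⟨L, hLint, hLtend⟩ := hseq φ hφmono
    have key : ∀ n : ℕ, ε ≤ eLpNorm (M (φ (n + 1)) - L) 1 μ + eLpNorm (M (φ n) - L) 1 μ := by
      intro n
      have h1 : ε ≤ eLpNorm (M (φ (n + 1)) - M (φ n)) 1 μ := by
        rw [hφsucc]; exact (hg2 (φ n)).le
      refine h1.trans ?_
      have heq : M (φ (n + 1)) - M (φ n) = (M (φ (n + 1)) - L) - (M (φ n) - L) :=
        (sub_sub_sub_cancel_right _ _ _).symm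
      rw [heq]
      exact eLpNorm_sub_le ((hint _).sub hLint).aestronglyMeasurable
        ((hint _).sub hLint).aestronglyMeasurable le_rfl
    have htend : Tendsto
        (fun n => eLpNorm (M (φ (n + 1)) - L) 1 μ + eLpNorm (M (φ n) - L) 1 μ)
        atTop (nhds 0) := by
      have h1 : Tendsto (fun n => eLpNorm (M (φ (n + 1)) - L) 1 μ) atTop (nhds 0) :=
        hLtend.comp (tendsto_add_atTop_nat 1)
      simpa using h1.add hLtend
    exact hε.not_ge (ge_of_tendsto' htend key)
  -- choose a fast Cauchy sequence
  choose iseq hiseq using fun n : ℕ =>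
    hcauchy ((n : ENNReal) + 1)⁻¹ (ENNReal.inv_pos.mpr (by simp))
  choose sup hsup1 hsup2 using hdir
  set ψ : ℕ → I := fun n => Nat.rec (iseq 0) (fun m p => sup p (iseq (m + 1))) n with hψdef
  have hψs : ∀ n, ψ (n + 1) = sup (ψ n) (iseq (n + 1)) := fun n => rfl
  have hψmono : Monotone ψ := monotone_nat_of_le_succ fun n => by
    rw [hψs]; exact hsup1 _ _
  have hψge : ∀ n, iseq n ≤ ψ n := by
    intro n
    cases n with
    | zero => exact le_rfl
    | succ m => rw [hψs]; exact hsup2 _ _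
  have hkey : ∀ n : ℕ, ∀ j, ψ n ≤ j →
      eLpNorm (M j - M (ψ n)) 1 μ ≤ ((n : ENNReal) + 1)⁻¹ + ((n : ENNReal) + 1)⁻¹ := by
    intro n j hj
    have h1 := hiseq n j ((hψge n).trans hj)
    have h2 := hiseq n (ψ n) (hψge n)
    have heq : M j - M (ψ n) = (M j - M (iseq n)) - (M (ψ n) - M (iseq n)) :=
      (sub_sub_sub_cancel_right _ _ _).symm
    rw [heq]
    exact le_trans (eLpNorm_sub_le ((hint _).sub (hint _)).aestronglyMeasurable
      ((hint _).sub (hint _)).aestronglyMeasurable le_rfl) (add_le_add h1 h2)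
  obtain ⟨L, hLint, hLtend⟩ := hseq ψ hψmono
  refine ⟨L, hLint, fun i => ?_⟩
  have hbound : ∀ n : ℕ, eLpNorm (μ[L|ℱ i] - M i) 1 μ ≤
      eLpNorm (M (ψ n) - L) 1 μ + (((n : ENNReal) + 1)⁻¹ + ((n : ENNReal) + 1)⁻¹) := by
    intro n
    have hik : i ≤ sup i (ψ n) := hsup1 _ _
    have hψk : ψ n ≤ sup i (ψ n) := hsup2 _ _
    set k := sup i (ψ n) with hkdef
    have h1 : μ[L|ℱ i] - M i =ᵐ[μ] μ[L - M k|ℱ i] := by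
      have hsub := condExp_sub (m := ℱ i) (μ := μ) hLint (hint k)
      filter_upwards [hsub, hmart i k hik] with x hx hx2
      simp only [Pi.sub_apply] at hx ⊢
      rw [hx, hx2]
    calc eLpNorm (μ[L|ℱ i] - M i) 1 μ
        = eLpNorm (μ[L - M k|ℱ i]) 1 μ := eLpNorm_congr_ae h1
      _ ≤ eLpNorm (L - M k) 1 μ := eLpNorm_one_condExp_le_eLpNorm _
      _ = eLpNorm ((L - M (ψ n)) - (M k - M (ψ n))) 1 μ := by
          rw [sub_sub_sub_cancel_right]
      _ ≤ eLpNorm (L - M (ψ n)) 1 μ + eLpNorm (M k - M (ψ n)) 1 μ :=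
          eLpNorm_sub_le (hLint.sub (hint _)).aestronglyMeasurable
            ((hint _).sub (hint _)).aestronglyMeasurable le_rfl
      _ ≤ eLpNorm (M (ψ n) - L) 1 μ + (((n : ENNReal) + 1)⁻¹ + ((n : ENNReal) + 1)⁻¹) := by
          rw [eLpNorm_sub_comm]
          exact add_le_add le_rfl (hkey n k hψk)
  have hinv : Tendsto (fun n : ℕ => ((n : ENNReal) + 1)⁻¹) atTop (nhds 0) := by
    have h := ENNReal.tendsto_inv_nat_nhds_zero.comp (tendsto_add_atTop_nat 1)
    refine h.congr fun n => ?_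
    simp [Function.comp]
  have htend : Tendsto (fun n : ℕ => eLpNorm (M (ψ n) - L) 1 μ +
      (((n : ENNReal) + 1)⁻¹ + ((n : ENNReal) + 1)⁻¹)) atTop (nhds 0) := by
    simpa using hLtend.add (hinv.add hinv)
  have hzero : eLpNorm (μ[L|ℱ i] - M i) 1 μ = 0 :=
    le_antisymm (ge_of_tendsto' htend hbound) zero_le
  have hmeasLM : AEStronglyMeasurable (μ[L|ℱ i] - M i) μ :=
    ((stronglyMeasurable_condExp.mono (hle i)).aestronglyMeasurable).sub
      (hint i).aestronglyMeasurable
  have hae := (eLpNorm_eq_zero_iff hmeasLM one_ne_zero).mp hzero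
  filter_upwards [hae] with x hx
  simpa [Pi.sub_apply, sub_eq_zero] using hx
end
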